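/- arXiv:1712.09529 — 7 statements merged into one kernel-verified Lean document; each statement's English description precedes it below -/
import Mathlib

section
/- Let Γ be a strictly Deza graph with parameters (n, k, b, a) with k = b + 1 and β(v) > 1 for every vertex v. Then for every vertex v of Γ, exactly one of the following holds: (1) B(v) ∩ N(v) = ∅; (2) B(v) ⊆ N(v); (3) |B(v) ∩ N(v)| = 1. -/
open Finset SimpleGraph

universe u v

/-- The number of common neighbours of two vertices. -/
def commonNbrs {V : Type u} [Fintype V] [DecidableEq V] (G : SimpleGraph V)
    [DecidableRel G.Adj] (x y : V) : ℕ :=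
  (G.neighborFinset x ∩ G.neighborFinset y).card

/-- `G` is a Deza graph with parameters `(n, k, b, a)`: a nonempty `k`-regular graph on `n`
vertices in which any two distinct vertices have either `b` or `a` common neighbours,
where `b ≥ a`. -/
def IsDezaGraph {V : Type u} [Fintype V] [DecidableEq V] (G : SimpleGraph V)
    [DecidableRel G.Adj] (n k b a : ℕ) : Prop :=
  G ≠ ⊥ ∧ Fintype.card V = n ∧ G.IsRegularOfDegree k ∧ a ≤ b ∧
    ∀ x y : V, x ≠ y → commonNbrs G x y = b ∨ commonNbrs G x y = a

/-- `G` is a strictly Deza graph with parameters `(n, k, b, a)`: a Deza graph of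
diameter 2 that is not strongly regular. -/
def IsStrictlyDezaGraph {V : Type u} [Fintype V] [DecidableEq V] (G : SimpleGraph V)
    [DecidableRel G.Adj] (n k b a : ℕ) : Prop :=
  IsDezaGraph G n k b a ∧ G.Connected ∧ (∀ x y : V, G.dist x y ≤ 2) ∧
    (∃ x y : V, G.dist x y = 2) ∧ ¬ ∃ ℓ μ : ℕ, G.IsSRGWith n k ℓ μ

/-- `B(v)`: the set of vertices `u ≠ v` having exactly `b` common neighbours with `v`. -/
def dezaB {V : Type u} [Fintype V] [DecidableEq V] (G : SimpleGraph V)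
    [DecidableRel G.Adj] (b : ℕ) (v : V) : Finset V :=
  univ.filter fun u => u ≠ v ∧ commonNbrs G u v = b

/-- `A(v)`: the set of vertices `u ≠ v` having exactly `a` common neighbours with `v`. -/
def dezaA {V : Type u} [Fintype V] [DecidableEq V] (G : SimpleGraph V)
    [DecidableRel G.Adj] (a : ℕ) (v : V) : Finset V :=
  univ.filter fun u => u ≠ v ∧ commonNbrs G u v = a

/-- `B[v] = B(v) ∪ {v}`. -/
def dezaBc {V : Type u} [Fintype V] [DecidableEq V] (G : SimpleGraph V)
    [DecidableRel G.Adj] (b : ℕ) (v : V) : Finset V :=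
  insert v (dezaB G b v)

/-- A vertex `v` is of type (A) if `B(v) ∩ N(v) = ∅`. -/
def IsTypeA {V : Type u} [Fintype V] [DecidableEq V] (G : SimpleGraph V)
    [DecidableRel G.Adj] (b : ℕ) (v : V) : Prop :=
  dezaB G b v ∩ G.neighborFinset v = ∅

/-- A vertex `v` is of type (B) if `B(v) ⊆ N(v)`. -/
def IsTypeB {V : Type u} [Fintype V] [DecidableEq V] (G : SimpleGraph V)
    [DecidableRel G.Adj] (b : ℕ) (v : V) : Prop :=
  dezaB G b v ⊆ G.neighborFinset v

/-- A vertex `v` is of type (C) if `|B(v) ∩ N(v)| = 1`. -/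
def IsTypeC {V : Type u} [Fintype V] [DecidableEq V] (G : SimpleGraph V)
    [DecidableRel G.Adj] (b : ℕ) (v : V) : Prop :=
  (dezaB G b v ∩ G.neighborFinset v).card = 1

/-- A vertex `x` of type (A) is of type (A1) if there exists `y ∈ N(x)` with
`N(x) \ N(xᵢ) = {y}` for every `xᵢ ∈ B(x)`. -/
def IsTypeA1 {V : Type u} [Fintype V] [DecidableEq V] (G : SimpleGraph V)
    [DecidableRel G.Adj] (b : ℕ) (x : V) : Prop :=
  IsTypeA G b x ∧ ∃ y ∈ G.neighborFinset x,
    ∀ xi ∈ dezaB G b x, G.neighborFinset x \ G.neighborFinset xi = {y}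

/-- A vertex `x` of type (A) is of type (A2) if there exists `z ∉ N[x]` with
`N(xᵢ) \ N(x) = {z}` for every `xᵢ ∈ B(x)`. -/
def IsTypeA2 {V : Type u} [Fintype V] [DecidableEq V] (G : SimpleGraph V)
    [DecidableRel G.Adj] (b : ℕ) (x : V) : Prop :=
  IsTypeA G b x ∧ ∃ z ∉ insert x (G.neighborFinset x),
    ∀ xi ∈ dezaB G b x, G.neighborFinset xi \ G.neighborFinset x = {z}

/-- The complete multipartite graph with `m` parts of size `t`. -/
def completeMultipartiteGr (m t : ℕ) : SimpleGraph (Fin m × Fin t) where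
  Adj u v := u.1 ≠ v.1
  symm := ⟨fun _ _ h => Ne.symm h⟩
  loopless := ⟨fun _ h => h rfl⟩

/-- The 2-clique extension of a graph `H`: vertices `(u, i)` and `(v, j)` are adjacent
iff `u ~ v` in `H`, or `u = v` and `i ≠ j`. -/
def cliqueExt2 {W : Type v} (H : SimpleGraph W) : SimpleGraph (W × Fin 2) where
  Adj u v := H.Adj u.1 v.1 ∨ (u.1 = v.1 ∧ u.2 ≠ v.2)
  symm := by
    constructor
    intro u v h
    rcases h with h | ⟨h1, h2⟩
    · exact Or.inl h.symm
    · exact Or.inr ⟨h1.symm, h2.symm⟩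
  loopless := by
    constructor
    intro u h
    rcases h with h | ⟨_, h2⟩
    · exact H.loopless.irrefl _ h
    · exact h2 rfl

theorem stmt4 {V : Type u} [Fintype V] [DecidableEq V] (G : SimpleGraph V)
    [DecidableRel G.Adj] (n k b a : ℕ)
    (hG : IsStrictlyDezaGraph G n k b a) (hk : k = b + 1)
    (hβ : ∀ v : V, 1 < (dezaB G b v).card) :
    ∀ x : V,
      (IsTypeA G b x ∧ ¬ IsTypeB G b x ∧ ¬ IsTypeC G b x) ∨
      (¬ IsTypeA G b x ∧ IsTypeB G b x ∧ ¬ IsTypeC G b x) ∨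
      (¬ IsTypeA G b x ∧ ¬ IsTypeB G b x ∧ IsTypeC G b x) := by
  

  obtain ⟨⟨_, _, hreg, _, _⟩, _⟩ := hG
  have hdeg : ∀ v : V, (G.neighborFinset v).card = k := by
    intro v; rw [G.card_neighborFinset_eq_degree]; exact hreg v
  intro x
  -- key: a vertex of B(x) adjacent to x has all its neighbours in N(x) ∪ {x}
  have key : ∀ u ∈ dezaB G b x, u ∈ G.neighborFinset x →
      G.neighborFinset u ⊆ insert x (G.neighborFinset x) := by
    intro u hu hux
    have hcom : commonNbrs G u x = b := (Finset.mem_filter.mp hu).2.2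
    have hadj : G.Adj u x := ((G.mem_neighborFinset x u).mp hux).symm
    have hxu : x ∈ G.neighborFinset u := (G.mem_neighborFinset u x).mpr hadj
    have hxnot : x ∉ G.neighborFinset u ∩ G.neighborFinset x := by
      intro h
      exact G.notMem_neighborFinset_self x (Finset.mem_inter.mp h).2
    have hsub : insert x (G.neighborFinset u ∩ G.neighborFinset x) ⊆ G.neighborFinset u :=
      Finset.insert_subset hxu Finset.inter_subset_left
    have hcard : (insert x (G.neighborFinset u ∩ G.neighborFinset x)).card = b + 1 := by
      rw [Finset.card_insert_of_notMem hxnot]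
      exact congrArg (· + 1) hcom
    have heq : insert x (G.neighborFinset u ∩ G.neighborFinset x) = G.neighborFinset u :=
      Finset.eq_of_subset_of_card_le hsub (by rw [hdeg u, hk, hcard])
    intro w hw
    rw [← heq] at hw
    rcases Finset.mem_insert.mp hw with h | h
    · rw [h]; exact Finset.mem_insert_self x _
    · exact Finset.mem_insert_of_mem (Finset.mem_inter.mp h).2
  set s := dezaB G b x ∩ G.neighborFinset x with hs
  by_cases h0 : s.card = 0
  · -- Type A
    have hA : IsTypeA G b x := Finset.card_eq_zero.mp h0
    refine Or.inl ⟨hA, ?_, ?_⟩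
    · intro hBt
      have he : s = dezaB G b x := Finset.inter_eq_left.mpr hBt
      have h2 := hβ x
      rw [← he, h0] at h2
      omega
    · intro hC
      rw [IsTypeC, ← hs] at hC
      omega
  · by_cases h1 : s.card = 1
    · -- Type C
      refine Or.inr (Or.inr ⟨?_, ?_, h1⟩)
      · intro hA
        rw [IsTypeA, ← hs] at hA
        rw [hA] at h1
        simp at h1
      · intro hB
        have : s = dezaB G b x := Finset.inter_eq_left.mpr hB
        have h2 := hβ x
        rw [← this] at h2
        omega
    · -- card ≥ 2 : Type B
      have h2 : 1 < s.card := by omega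
      obtain ⟨u1, hu1, u2, hu2, hne⟩ := Finset.one_lt_card.mp h2
      have hB : IsTypeB G b x := by
        intro w hw
        by_contra hwn
        have hwne : w ≠ x := (Finset.mem_filter.mp hw).2.1
        have hwcom : commonNbrs G w x = b := (Finset.mem_filter.mp hw).2.2
        -- |N(x) \ N(w)| = 1
        have hsd : (G.neighborFinset x \ G.neighborFinset w).card = 1 := by
          have h3 := Finset.card_sdiff_add_card_inter (G.neighborFinset x) (G.neighborFinset w)
          have h4 : (G.neighborFinset x ∩ G.neighborFinset w).card = b := by
            rw [Finset.inter_comm]; exact hwcom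
          rw [h4, hdeg x, hk] at h3
          omega
        -- one of u1, u2 is adjacent to w
        have hkey : ∃ u ∈ s, u ∈ G.neighborFinset w := by
          by_contra hcon
          push_neg at hcon
          have m1 : u1 ∈ G.neighborFinset x \ G.neighborFinset w :=
            Finset.mem_sdiff.mpr ⟨(Finset.mem_inter.mp hu1).2, hcon u1 hu1⟩
          have m2 : u2 ∈ G.neighborFinset x \ G.neighborFinset w :=
            Finset.mem_sdiff.mpr ⟨(Finset.mem_inter.mp hu2).2, hcon u2 hu2⟩
          have : 1 < (G.neighborFinset x \ G.neighborFinset w).card :=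
            Finset.one_lt_card.mpr ⟨u1, m1, u2, m2, hne⟩
          omega
        obtain ⟨u, hus, huw⟩ := hkey
        have hadj : G.Adj u w := ((G.mem_neighborFinset w u).mp huw).symm
        have hwin : w ∈ G.neighborFinset u := (G.mem_neighborFinset u w).mpr hadj
        have := key u (Finset.mem_inter.mp hus).1 (Finset.mem_inter.mp hus).2 hwin
        rcases Finset.mem_insert.mp this with h | h
        · exact hwne h
        · exact hwn h
      refine Or.inr (Or.inl ⟨?_, hB, ?_⟩)
      · intro hA
        rw [IsTypeA] at hA
        rw [← hs] at hA
        rw [hA] at h2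
        simp at h2
      · intro hC
        rw [IsTypeC, ← hs] at hC
        omega
end

section
/- Let Γ be a strictly Deza graph with parameters (n, k, b, a) with k = b + 1 and β(v) > 1 for every vertex v. Then b > a > 0, and α(v) > 0 for every vertex v. -/
open Finset SimpleGraph

universe u v

section Helpers

variable {V : Type u} [Fintype V] [DecidableEq V] (G : SimpleGraph V) [DecidableRel G.Adj]

lemma card_commonNeighbors_eq (x y : V) :
    Fintype.card (G.commonNeighbors x y) = commonNbrs G x y := by
  rw [commonNbrs, ← Set.toFinset_card]
  congr 1
  ext w
  simp [SimpleGraph.commonNeighbors, SimpleGraph.mem_neighborFinset, Set.mem_toFinset]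
  convert (Set.mem_toFinset (s := G.neighborSet x ∩ G.neighborSet y) (a := w))
  · congr 1
    exact Subsingleton.elim _ _
  · exact Iff.rfl

lemma exists_common_nbr (hconn : G.Connected) (hd2 : ∀ x y : V, G.dist x y ≤ 2)
    {x y : V} (hne : x ≠ y) (hna : ¬ G.Adj x y) : ∃ w, G.Adj x w ∧ G.Adj y w := by
  have hd : G.dist x y = 2 := by
    have h0 : G.dist x y ≠ 0 := fun h => hne (hconn.dist_eq_zero_iff.mp h)
    have h1 : G.dist x y ≠ 1 := fun h => hna (SimpleGraph.dist_eq_one_iff_adj.mp h)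
    have := hd2 x y
    omega
  obtain ⟨p, hp⟩ := (hconn x y).exists_walk_length_eq_dist
  rw [hd] at hp
  cases p with
  | nil => simp at hp
  | cons h q =>
    cases q with
    | nil => simp at hp
    | cons h' q' =>
      cases q' with
      | nil => exact ⟨_, h, h'.symm⟩
      | cons h'' q'' => simp [SimpleGraph.Walk.length_cons] at hp

end Helpers

theorem stmt5 {V : Type u} [Fintype V] [DecidableEq V] (G : SimpleGraph V)
    [DecidableRel G.Adj] (n k b a : ℕ)
    (hG : IsStrictlyDezaGraph G n k b a) (hk : k = b + 1)
    (hβ : ∀ v : V, 1 < (dezaB G b v).card) :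
    a < b ∧ 0 < a ∧ ∀ w : V, 0 < (dezaA G a w).card := by
  unfold IsStrictlyDezaGraph IsDezaGraph at hG
  obtain ⟨⟨hbot, hcard, hreg, hab, hdich⟩, hconn, hd2, ⟨x0, y0, hx0y0⟩, hnsrg⟩ := hG
  have hdeg : ∀ v : V, (G.neighborFinset v).card = k := fun v => by
    rw [G.card_neighborFinset_eq_degree]; exact hreg v
  have hx0y0_ne : x0 ≠ y0 := by
    rintro rfl
    rw [SimpleGraph.dist_self] at hx0y0
    omega
  have hx0y0_na : ¬ G.Adj x0 y0 := by
    intro h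
    rw [SimpleGraph.dist_eq_one_iff_adj.mpr h] at hx0y0
    omega
  -- Step 1 : a < b
  have hab' : a < b := by
    rcases lt_or_eq_of_le hab with h | h
    · exact h
    · exfalso
      apply hnsrg
      refine ⟨b, b, hcard, hreg, ?_, ?_⟩
      · intro p q hpq
        rw [card_commonNeighbors_eq]
        rcases hdich p q hpq.ne with h' | h' <;> omega
      · intro p q hpq _
        rw [card_commonNeighbors_eq]
        rcases hdich p q hpq with h' | h' <;> omega
  -- Step 2 : every vertex has positive alpha
  have halpha : ∀ w : V, 0 < (dezaA G a w).card := by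
    intro v
    by_contra hc
    push_neg at hc
    have hA0 : dezaA G a v = ∅ := Finset.card_eq_zero.mp (Nat.le_zero.mp hc)
    have hball : ∀ u : V, u ≠ v → commonNbrs G u v = b := by
      intro u hu
      rcases hdich u v hu with h' | h'
      · exact h'
      · exfalso
        have hmem : u ∈ dezaA G a v := by
          simp only [dezaA, Finset.mem_filter, Finset.mem_univ, true_and]
          exact ⟨hu, h'⟩
        rw [hA0] at hmem
        simp at hmem
    set C := insert v (G.neighborFinset v) with hC
    have hsub : ∀ x ∈ G.neighborFinset v,
        (G.neighborFinset v).erase x ⊆ G.neighborFinset x := by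
      intro x hx
      have hxv : G.Adj v x := (SimpleGraph.mem_neighborFinset _ _ _).mp hx
      have hcb : commonNbrs G x v = b := hball x hxv.ne'
      have hss : G.neighborFinset x ∩ G.neighborFinset v ⊆ (G.neighborFinset v).erase x := by
        intro u hu
        rw [Finset.mem_inter] at hu
        refine Finset.mem_erase.mpr ⟨?_, hu.2⟩
        rintro rfl
        exact G.irrefl ((SimpleGraph.mem_neighborFinset _ _ _).mp hu.1)
      have hcbc : (G.neighborFinset x ∩ G.neighborFinset v).card = b := hcb
      have hcards : ((G.neighborFinset v).erase x).card ≤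
          (G.neighborFinset x ∩ G.neighborFinset v).card := by
        rw [Finset.card_erase_of_mem hx, hdeg v]
        omega
      have heq := Finset.eq_of_subset_of_card_le hss hcards
      rw [← heq]
      exact Finset.inter_subset_left
    have hclosed : ∀ x ∈ C, ∀ y, G.Adj x y → y ∈ C := by
      intro x hxC y hxy
      rcases Finset.mem_insert.mp hxC with rfl | hx
      · exact Finset.mem_insert_of_mem ((SimpleGraph.mem_neighborFinset _ _ _).mpr hxy)
      · by_cases hyv : y = v
        · exact hyv ▸ Finset.mem_insert_self _ _
        · have hxv : G.Adj v x := (SimpleGraph.mem_neighborFinset _ _ _).mp hx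
          have h1 : insert v ((G.neighborFinset v).erase x) ⊆ G.neighborFinset x := by
            intro u hu
            rcases Finset.mem_insert.mp hu with rfl | hu
            · exact (SimpleGraph.mem_neighborFinset _ _ _).mpr hxv.symm
            · exact hsub x hx hu
          have hvnm : v ∉ (G.neighborFinset v).erase x := fun hmem =>
            G.irrefl ((SimpleGraph.mem_neighborFinset _ _ _).mp (Finset.mem_of_mem_erase hmem))
          have hcard1 : (insert v ((G.neighborFinset v).erase x)).card = k := by
            rw [Finset.card_insert_of_notMem hvnm, Finset.card_erase_of_mem hx, hdeg v]
            omega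
          have heq : insert v ((G.neighborFinset v).erase x) = G.neighborFinset x :=
            Finset.eq_of_subset_of_card_le h1 (by rw [hdeg x, hcard1])
          have hy : y ∈ insert v ((G.neighborFinset v).erase x) := by
            rw [heq]
            exact (SimpleGraph.mem_neighborFinset _ _ _).mpr hxy
          rcases Finset.mem_insert.mp hy with rfl | hy'
          · exact absurd rfl hyv
          · exact Finset.mem_insert_of_mem (Finset.mem_of_mem_erase hy')
    have key : ∀ (u z : V) (p : G.Walk u z), u ∈ C → z ∈ C := by
      intro u z p
      induction p with
      | nil => exact id
      | cons h q ih => exact fun hu => ih (hclosed _ hu _ h)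
    have hall : ∀ z : V, z ∈ C := by
      intro z
      obtain ⟨p⟩ := hconn v z
      exact key v z p (Finset.mem_insert_self _ _)
    have hx0C := hall x0
    have hy0C := hall y0
    rcases Finset.mem_insert.mp hx0C with rfl | hx0'
    · rcases Finset.mem_insert.mp hy0C with rfl | hy0'
      · exact hx0y0_ne rfl
      · exact hx0y0_na ((SimpleGraph.mem_neighborFinset _ _ _).mp hy0')
    · rcases Finset.mem_insert.mp hy0C with rfl | hy0'
      · exact hx0y0_na ((SimpleGraph.mem_neighborFinset _ _ _).mp hx0').symm
      · have hmem : y0 ∈ (G.neighborFinset v).erase x0 :=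
          Finset.mem_erase.mpr ⟨hx0y0_ne.symm, hy0'⟩
        exact hx0y0_na ((SimpleGraph.mem_neighborFinset _ _ _).mp (hsub x0 hx0' hmem))
  -- Step 3 : 0 < a
  have ha : 0 < a := by
    by_contra h
    have ha0 : a = 0 := by omega
    subst ha0
    have hAedge : ∀ x : V, ∃ y, G.Adj x y ∧
        G.neighborFinset y ∩ G.neighborFinset x = ∅ := by
      intro x
      obtain ⟨y, hy⟩ := Finset.card_pos.mp (halpha x)
      simp only [dezaA, Finset.mem_filter, Finset.mem_univ, true_and] at hy
      obtain ⟨hyx, hyc⟩ := hy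
      have hc0 : (G.neighborFinset y ∩ G.neighborFinset x).card = 0 := hyc
      have hadj : G.Adj x y := by
        by_contra hna
        obtain ⟨w, hw1, hw2⟩ := exists_common_nbr G hconn hd2 (Ne.symm hyx) hna
        have hwm : w ∈ G.neighborFinset y ∩ G.neighborFinset x := by
          rw [Finset.mem_inter, SimpleGraph.mem_neighborFinset, SimpleGraph.mem_neighborFinset]
          exact ⟨hw2, hw1⟩
        rw [Finset.card_eq_zero.mp hc0] at hwm
        simp at hwm
      exact ⟨y, hadj, Finset.card_eq_zero.mp hc0⟩
    apply hnsrg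
    refine ⟨0, b, hcard, hreg, ?_, ?_⟩
    · intro p q hpq
      rw [card_commonNeighbors_eq]
      obtain ⟨y, hy1, hy2⟩ := hAedge p
      by_cases hqy : q = y
      · subst hqy
        rw [commonNbrs, Finset.inter_comm, hy2, Finset.card_empty]
      · rcases hdich p q hpq.ne with hcb | hca
        · exfalso
          have hss : G.neighborFinset p ∩ G.neighborFinset q ⊆
              ((G.neighborFinset p).erase y).erase q := by
            intro u hu
            rw [Finset.mem_inter] at hu
            refine Finset.mem_erase.mpr ⟨?_, Finset.mem_erase.mpr ⟨?_, hu.1⟩⟩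
            · rintro rfl
              exact G.irrefl ((SimpleGraph.mem_neighborFinset _ _ _).mp hu.2)
            · rintro rfl
              have hq : q ∈ G.neighborFinset u ∩ G.neighborFinset p := by
                rw [Finset.mem_inter, SimpleGraph.mem_neighborFinset,
                  SimpleGraph.mem_neighborFinset]
                exact ⟨((SimpleGraph.mem_neighborFinset _ _ _).mp hu.2).symm, hpq⟩
              rw [hy2] at hq
              simp at hq
          have hcard_le := Finset.card_le_card hss
          have hyp : y ∈ G.neighborFinset p := (SimpleGraph.mem_neighborFinset _ _ _).mpr hy1
          have hqp : q ∈ (G.neighborFinset p).erase y :=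
            Finset.mem_erase.mpr ⟨hqy, (SimpleGraph.mem_neighborFinset _ _ _).mpr hpq⟩
          rw [Finset.card_erase_of_mem hqp, Finset.card_erase_of_mem hyp, hdeg p] at hcard_le
          have hcbc : (G.neighborFinset p ∩ G.neighborFinset q).card = b := hcb
          omega
        · exact hca
    · intro p q hpq hna
      rw [card_commonNeighbors_eq]
      rcases hdich p q hpq with h' | h'
      · exact h'
      · exfalso
        obtain ⟨w, hw1, hw2⟩ := exists_common_nbr G hconn hd2 hpq hna
        have hwm : w ∈ G.neighborFinset p ∩ G.neighborFinset q := by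
          rw [Finset.mem_inter, SimpleGraph.mem_neighborFinset, SimpleGraph.mem_neighborFinset]
          exact ⟨hw1, hw2⟩
        have hpos : 0 < (G.neighborFinset p ∩ G.neighborFinset q).card :=
          Finset.card_pos.mpr ⟨w, hwm⟩
        have hcc : commonNbrs G p q = 0 := h'
        rw [commonNbrs] at hcc
        omega
  exact ⟨hab', ha, halpha⟩
end

section
/- Let Γ be a strictly Deza graph with parameters (n, k, b, a) with k = b + 1 and β(v) > 1 for every vertex v. Let x be a vertex of type (A). If there exist two distinct vertices x₁, x₂ ∈ B(x) such that N(x) ∩ N(x₁) = N(x) ∩ N(x₂), then N(x) ∩ N(x₁) = N(x) ∩ N(xᵢ) for every vertex xᵢ ∈ B(x). -/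
open Finset SimpleGraph

universe u v

theorem stmt6 {V : Type u} [Fintype V] [DecidableEq V] (G : SimpleGraph V)
    [DecidableRel G.Adj] (n k b a : ℕ)
    (hG : IsStrictlyDezaGraph G n k b a) (hk : k = b + 1)
    (hβ : ∀ v : V, 1 < (dezaB G b v).card) :
    ∀ x x1 x2 : V, IsTypeA G b x → x1 ∈ dezaB G b x → x2 ∈ dezaB G b x → x1 ≠ x2 →
      G.neighborFinset x ∩ G.neighborFinset x1 =
        G.neighborFinset x ∩ G.neighborFinset x2 →
      ∀ xi ∈ dezaB G b x,
        G.neighborFinset x ∩ G.neighborFinset x1 =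
          G.neighborFinset x ∩ G.neighborFinset xi := by
  
  obtain ⟨⟨hne, hcardV, hreg, hab, hdeza⟩, -, -, -, -⟩ := hG
  have hdeg : ∀ v : V, (G.neighborFinset v).card = b + 1 := by
    intro v
    have h := hreg v
    rwa [hk] at h
  intro x x1 x2 hA h1 h2 h12 heq xi hi
  have hA' : dezaB G b x ∩ G.neighborFinset x = ∅ := hA
  have hmem : ∀ u, u ∈ dezaB G b x → u ≠ x ∧
      (G.neighborFinset x ∩ G.neighborFinset u).card = b ∧ u ∉ G.neighborFinset x := by
    intro u hu
    have hu' : u ≠ x ∧ commonNbrs G u x = b := by simpa [dezaB] using hu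
    refine ⟨hu'.1, ?_, ?_⟩
    · rw [Finset.inter_comm]; exact hu'.2
    · intro hmemu
      have : u ∈ dezaB G b x ∩ G.neighborFinset x := Finset.mem_inter.mpr ⟨hu, hmemu⟩
      rw [hA'] at this
      exact absurd this (Finset.notMem_empty u)
  have key : ∀ u ∈ dezaB G b x, ∃ yu wu,
      yu ∈ G.neighborFinset x ∧
      G.neighborFinset x \ G.neighborFinset u = {yu} ∧
      G.neighborFinset u \ G.neighborFinset x = {wu} := by
    intro u hu
    obtain ⟨hux, hcb, hunadj⟩ := hmem u hu
    have hs1 : (G.neighborFinset x \ G.neighborFinset u).card = 1 := by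
      have h := Finset.card_inter_add_card_sdiff (G.neighborFinset x) (G.neighborFinset u)
      have hx := hdeg x
      omega
    have hs2 : (G.neighborFinset u \ G.neighborFinset x).card = 1 := by
      have h := Finset.card_inter_add_card_sdiff (G.neighborFinset u) (G.neighborFinset x)
      have h3 : (G.neighborFinset u ∩ G.neighborFinset x).card = b := by
        rw [Finset.inter_comm]; exact hcb
      have hu2 := hdeg u
      omega
    obtain ⟨yu, hyu⟩ := Finset.card_eq_one.mp hs1
    obtain ⟨wu, hwu⟩ := Finset.card_eq_one.mp hs2
    refine ⟨yu, wu, ?_, hyu, hwu⟩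
    have hm : yu ∈ G.neighborFinset x \ G.neighborFinset u := by
      rw [hyu]; exact Finset.mem_singleton_self yu
    exact (Finset.mem_sdiff.mp hm).1
  obtain ⟨y1, w1, hy1x, hy1, hw1⟩ := key x1 h1
  obtain ⟨y2, w2, hy2x, hy2, hw2⟩ := key x2 h2
  obtain ⟨yi, wi, hyix, hyi, hwi⟩ := key xi hi
  have hsd12 : G.neighborFinset x \ G.neighborFinset x1
      = G.neighborFinset x \ G.neighborFinset x2 := by
    rw [← Finset.sdiff_inter_self_left (G.neighborFinset x) (G.neighborFinset x1), heq,
      Finset.sdiff_inter_self_left]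
  have hy21 : y2 = y1 := by
    have : ({y1} : Finset V) = {y2} := by rw [← hy1, ← hy2, hsd12]
    exact (Finset.singleton_inj.mp this).symm
  rcases eq_or_ne yi y1 with hyy | hyy
  · -- then the sdiffs agree, so the intersections agree
    have hsd : G.neighborFinset x \ G.neighborFinset x1
        = G.neighborFinset x \ G.neighborFinset xi := by rw [hy1, hyi, hyy]
    calc G.neighborFinset x ∩ G.neighborFinset x1
        = G.neighborFinset x \ (G.neighborFinset x \ G.neighborFinset x1) :=
          (Finset.sdiff_sdiff_self_left _ _).symm
      _ = G.neighborFinset x \ (G.neighborFinset x \ G.neighborFinset xi) := by rw [hsd]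
      _ = G.neighborFinset x ∩ G.neighborFinset xi := Finset.sdiff_sdiff_self_left _ _
  · exfalso
    have hxi1 : xi ≠ x1 := by
      rintro rfl
      exact hyy (Finset.singleton_inj.mp (hyi.symm.trans hy1))
    have hxi2 : xi ≠ x2 := by
      rintro rfl
      exact hyy ((Finset.singleton_inj.mp (hyi.symm.trans hy2)).trans hy21)
    have hw1m : w1 ∈ G.neighborFinset x1 \ G.neighborFinset x := by
      rw [hw1]; exact Finset.mem_singleton_self w1
    have hw2m : w2 ∈ G.neighborFinset x2 \ G.neighborFinset x := by
      rw [hw2]; exact Finset.mem_singleton_self w2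
    have hwim : wi ∈ G.neighborFinset xi \ G.neighborFinset x := by
      rw [hwi]; exact Finset.mem_singleton_self wi
    -- w1 ≠ w2
    have hw12 : w1 ≠ w2 := by
      intro hww
      have hsub : insert w1 (G.neighborFinset x ∩ G.neighborFinset x1)
          ⊆ G.neighborFinset x1 ∩ G.neighborFinset x2 := by
        refine Finset.insert_subset ?_ ?_
        · refine Finset.mem_inter.mpr ⟨(Finset.mem_sdiff.mp hw1m).1, ?_⟩
          rw [hww]
          exact (Finset.mem_sdiff.mp hw2m).1
        · intro t ht
          have ht2 : t ∈ G.neighborFinset x ∩ G.neighborFinset x2 := heq ▸ ht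
          exact Finset.mem_inter.mpr
            ⟨(Finset.mem_inter.mp ht).2, (Finset.mem_inter.mp ht2).2⟩
      have hcardins : (insert w1 (G.neighborFinset x ∩ G.neighborFinset x1)).card = b + 1 := by
        rw [Finset.card_insert_of_notMem, (hmem x1 h1).2.1]
        intro hmw
        exact (Finset.mem_sdiff.mp hw1m).2 (Finset.mem_inter.mp hmw).1
      have hle := Finset.card_le_card hsub
      rw [hcardins] at hle
      have hd := hdeza x1 x2 h12
      simp only [commonNbrs] at hd
      omega
    -- deriving a + 2 = b + 1 from a pair with different y's and different w's
    have habderive : ∀ u yu wu, u ∈ dezaB G b x → u ≠ xi →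
        G.neighborFinset x \ G.neighborFinset u = {yu} →
        G.neighborFinset u \ G.neighborFinset x = {wu} → yu ≠ yi → wu ≠ wi →
        a + 2 = b + 1 := by
      intro u yu wu hu huxi hyu hwu hyy' hww'
      have hyum : yu ∈ G.neighborFinset x \ G.neighborFinset u := by
        rw [hyu]; exact Finset.mem_singleton_self yu
      have hwum : wu ∈ G.neighborFinset u \ G.neighborFinset x := by
        rw [hwu]; exact Finset.mem_singleton_self wu
      have hyim : yi ∈ G.neighborFinset x \ G.neighborFinset xi := by
        rw [hyi]; exact Finset.mem_singleton_self yi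
      have hint : G.neighborFinset u ∩ G.neighborFinset xi
          = G.neighborFinset x \ {yu, yi} := by
        ext t
        simp only [Finset.mem_inter, Finset.mem_sdiff, Finset.mem_insert,
          Finset.mem_singleton]
        constructor
        · rintro ⟨htu, hti⟩
          by_cases htx : t ∈ G.neighborFinset x
          · refine ⟨htx, ?_⟩
            rintro (rfl | rfl)
            · exact (Finset.mem_sdiff.mp hyum).2 htu
            · exact (Finset.mem_sdiff.mp hyim).2 hti
          · exfalso
            have e1 : t = wu := by
              have : t ∈ G.neighborFinset u \ G.neighborFinset x :=
                Finset.mem_sdiff.mpr ⟨htu, htx⟩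
              rw [hwu] at this; simpa using this
            have e2 : t = wi := by
              have : t ∈ G.neighborFinset xi \ G.neighborFinset x :=
                Finset.mem_sdiff.mpr ⟨hti, htx⟩
              rw [hwi] at this; simpa using this
            exact hww' (e1 ▸ e2)
        · rintro ⟨htx, hne2⟩
          constructor
          · by_contra htu
            have : t ∈ G.neighborFinset x \ G.neighborFinset u :=
              Finset.mem_sdiff.mpr ⟨htx, htu⟩
            rw [hyu] at this
            exact hne2 (Or.inl (by simpa using this))
          · by_contra hti
            have : t ∈ G.neighborFinset x \ G.neighborFinset xi :=
              Finset.mem_sdiff.mpr ⟨htx, hti⟩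
            rw [hyi] at this
            exact hne2 (Or.inr (by simpa using this))
      have hsubyy : ({yu, yi} : Finset V) ⊆ G.neighborFinset x := by
        intro t ht
        rcases Finset.mem_insert.mp ht with rfl | ht
        · exact (Finset.mem_sdiff.mp hyum).1
        · rw [Finset.mem_singleton] at ht
          subst ht
          exact (Finset.mem_sdiff.mp hyim).1
      have hcard2 : ({yu, yi} : Finset V).card = 2 := by
        rw [Finset.card_insert_of_notMem (by simpa using hyy'), Finset.card_singleton]
      have hc : (G.neighborFinset u ∩ G.neighborFinset xi).card = b + 1 - 2 := by
        rw [hint, Finset.card_sdiff_of_subset hsubyy, hdeg, hcard2]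
      have hble : 2 ≤ b + 1 := by
        have := Finset.card_le_card hsubyy
        rw [hcard2, hdeg] at this
        exact this
      have hd := hdeza u xi huxi
      simp only [commonNbrs] at hd
      omega
    have hab2 : a + 2 = b + 1 := by
      rcases eq_or_ne w1 wi with hww | hww
      · refine habderive x2 y2 w2 h2 (Ne.symm hxi2) hy2 hw2 ?_ ?_
        · intro h; exact hyy (h ▸ hy21)
        · intro h; exact hw12 (hww.trans h.symm)
      · exact habderive x1 y1 w1 h1 (Ne.symm hxi1) hy1 hw1 (Ne.symm hyy) hww
    -- final contradiction: yi is adjacent to x, x1, x2, all outside N(x)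
    have hz1 : yi ∈ G.neighborFinset x1 := by
      by_contra h
      have : yi ∈ G.neighborFinset x \ G.neighborFinset x1 :=
        Finset.mem_sdiff.mpr ⟨hyix, h⟩
      rw [hy1] at this
      exact hyy (by simpa using this)
    have hz2 : yi ∈ G.neighborFinset x2 := by
      by_contra h
      have : yi ∈ G.neighborFinset x \ G.neighborFinset x2 :=
        Finset.mem_sdiff.mpr ⟨hyix, h⟩
      rw [hy2] at this
      exact hyy ((by simpa using this : yi = y2).trans hy21)
    have hxz : x ∈ G.neighborFinset yi :=
      (SimpleGraph.mem_neighborFinset G yi x).mpr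
        ((SimpleGraph.mem_neighborFinset G x yi).mp hyix).symm
    have hx1z : x1 ∈ G.neighborFinset yi :=
      (SimpleGraph.mem_neighborFinset G yi x1).mpr
        ((SimpleGraph.mem_neighborFinset G x1 yi).mp hz1).symm
    have hx2z : x2 ∈ G.neighborFinset yi :=
      (SimpleGraph.mem_neighborFinset G yi x2).mpr
        ((SimpleGraph.mem_neighborFinset G x2 yi).mp hz2).symm
    have hsub3 : ({x, x1, x2} : Finset V) ⊆ G.neighborFinset yi \ G.neighborFinset x := by
      refine Finset.insert_subset
        (Finset.mem_sdiff.mpr ⟨hxz, SimpleGraph.notMem_neighborFinset_self G x⟩)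
        (Finset.insert_subset
          (Finset.mem_sdiff.mpr ⟨hx1z, (hmem x1 h1).2.2⟩)
          (Finset.singleton_subset_iff.mpr
            (Finset.mem_sdiff.mpr ⟨hx2z, (hmem x2 h2).2.2⟩)))
    have hcard3 : ({x, x1, x2} : Finset V).card = 3 := by
      rw [Finset.card_insert_of_notMem, Finset.card_insert_of_notMem,
        Finset.card_singleton]
      · simpa using h12
      · simp only [Finset.mem_insert, Finset.mem_singleton]
        push_neg
        exact ⟨Ne.symm (hmem x1 h1).1, Ne.symm (hmem x2 h2).1⟩
    have h3le : 3 ≤ (G.neighborFinset yi \ G.neighborFinset x).card := by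
      have := Finset.card_le_card hsub3
      rwa [hcard3] at this
    have hsum := Finset.card_inter_add_card_sdiff (G.neighborFinset yi) (G.neighborFinset x)
    have hzx : yi ≠ x :=
      ((SimpleGraph.mem_neighborFinset G x yi).mp hyix).ne'
    have hd := hdeza yi x hzx
    simp only [commonNbrs] at hd
    have hdz := hdeg yi
    omega
end

section
/- Let Γ be a strictly Deza graph with parameters (n, k, b, a) with k = b + 1 and β(v) > 1 for every vertex v. If x is a vertex of type (A), then the subgraph of Γ induced on B[x] = B(x) ∪ {x} is a coclique (independent set) of size β(x) + 1. -/
open Finset SimpleGraph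

universe u v

lemma card_commonNeighbors_eq_commonNbrs {V : Type u} [Fintype V] [DecidableEq V]
    (G : SimpleGraph V) [DecidableRel G.Adj] (x y : V) :
    Fintype.card (G.commonNeighbors x y) = commonNbrs G x y := by
  rw [commonNbrs, ← Set.toFinset_card]
  congr 1
  ext z
  rw [Set.mem_toFinset]
  simp [SimpleGraph.commonNeighbors]

/-- The key trick: if `p ~ q` and they have `b = k - 1` common neighbours, then every
neighbour of `p` other than `q` is a neighbour of `q`. -/
lemma deza_trick {V : Type u} [Fintype V] [DecidableEq V]
    (G : SimpleGraph V) [DecidableRel G.Adj] {k b : ℕ} (hreg : G.IsRegularOfDegree k)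
    (hk : k = b + 1) {p q : V} (hpq : G.Adj p q)
    (hb : commonNbrs G p q = b) {r : V} (hr : r ∈ G.neighborFinset p) (hrq : r ≠ q) :
    r ∈ G.neighborFinset q := by
  have hsub : G.neighborFinset p ∩ G.neighborFinset q ⊆ (G.neighborFinset p).erase q := by
    intro s hs
    obtain ⟨h1, h2⟩ := Finset.mem_inter.mp hs
    exact Finset.mem_erase.mpr ⟨fun h => G.notMem_neighborFinset_self q (h ▸ h2), h1⟩
  have hcards : ((G.neighborFinset p).erase q).card = b := by
    rw [Finset.card_erase_of_mem ((G.mem_neighborFinset p q).mpr hpq)]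
    have := hreg p
    rw [SimpleGraph.degree] at this
    omega
  have heq : G.neighborFinset p ∩ G.neighborFinset q = (G.neighborFinset p).erase q :=
    Finset.eq_of_subset_of_card_le hsub (by rw [hcards, ← hb]; rfl)
  have : r ∈ (G.neighborFinset p).erase q := Finset.mem_erase.mpr ⟨hrq, hr⟩
  rw [← heq] at this
  exact (Finset.mem_inter.mp this).2

set_option maxHeartbeats 2000000 in
theorem stmt7 {V : Type u} [Fintype V] [DecidableEq V] (G : SimpleGraph V)
    [DecidableRel G.Adj] (n k b a : ℕ)
    (hG : IsStrictlyDezaGraph G n k b a) (hk : k = b + 1)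
    (hβ : ∀ v : V, 1 < (dezaB G b v).card) :
    ∀ x : V, IsTypeA G b x →
      (∀ u ∈ dezaBc G b x, ∀ w ∈ dezaBc G b x, ¬ G.Adj u w) ∧
      (dezaBc G b x).card = (dezaB G b x).card + 1 := by
  obtain ⟨⟨hne, hcard, hreg, hab, hD⟩, hconn, hd2, _hex, hnsrg⟩ := hG
  have hdeg : ∀ v : V, (G.neighborFinset v).card = k := fun v => hreg v
  have hcnbrs : ∀ p q : V, commonNbrs G p q =
      (G.neighborFinset p ∩ G.neighborFinset q).card := fun _ _ => rfl
  -- b > a, else G would be strongly regular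
  have hba : a < b := by
    rcases Nat.lt_or_ge a b with h | h
    · exact h
    · exfalso
      have hab' : a = b := le_antisymm hab h
      refine hnsrg ⟨b, b, hcard, hreg, ?_, ?_⟩
      · intro v w hvw
        rw [card_commonNeighbors_eq_commonNbrs]
        rcases hD v w hvw.ne with h' | h'
        · exact h'
        · rw [h', hab']
      · intro v w hvw hnadj
        rw [card_commonNeighbors_eq_commonNbrs]
        rcases hD v w hvw with h' | h'
        · exact h'
        · rw [h', hab']
  intro x hx
  have hxA : ∀ q, q ∈ dezaB G b x → ¬ G.Adj x q := by
    intro q hq hadj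
    have : q ∈ dezaB G b x ∩ G.neighborFinset x :=
      Finset.mem_inter.mpr ⟨hq, (G.mem_neighborFinset x q).mpr hadj⟩
    rw [hx] at this
    exact Finset.notMem_empty _ this
  have hxnB : x ∉ dezaB G b x := by simp [dezaB]
  refine ⟨?_, by rw [dezaBc, Finset.card_insert_of_notMem hxnB]⟩
  intro u hu w hw hadj
  rw [dezaBc, Finset.mem_insert] at hu hw
  rcases hu with rfl | hu
  · rcases hw with rfl | hw
    · exact G.loopless.irrefl _ hadj
    · exact hxA w hw hadj
  rcases hw with rfl | hw
  · exact hxA u hu hadj.symm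
  -- main case: u, w ∈ B(x), u ~ w
  obtain ⟨-, hux, hub⟩ := Finset.mem_filter.mp hu
  obtain ⟨-, hwx, hwb⟩ := Finset.mem_filter.mp hw
  have hnxu : ¬ G.Adj x u := hxA u hu
  have hnxw : ¬ G.Adj x w := hxA w hw
  have hunbx : u ∉ G.neighborFinset x := fun h => hnxu ((G.mem_neighborFinset x u).mp h)
  have hwnbx : w ∉ G.neighborFinset x := fun h => hnxw ((G.mem_neighborFinset x w).mp h)
  have huw : u ≠ w := G.ne_of_adj hadj
  have hwnbu : w ∈ G.neighborFinset u := (G.mem_neighborFinset u w).mpr hadj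
  have hunbw : u ∈ G.neighborFinset w := (G.mem_neighborFinset w u).mpr hadj.symm
  rw [hcnbrs] at hub hwb
  -- N(u) \ N(x) = {w}
  have hsub_u : ∀ r ∈ G.neighborFinset u, r ∈ G.neighborFinset x ∨ r = w := by
    have h1 : (G.neighborFinset u \ G.neighborFinset x).card = 1 := by
      have := Finset.card_inter_add_card_sdiff (G.neighborFinset u) (G.neighborFinset x)
      rw [hub, hdeg u] at this
      omega
    obtain ⟨z, hz⟩ := Finset.card_eq_one.mp h1
    have hwz : w = z := by
      have : w ∈ G.neighborFinset u \ G.neighborFinset x :=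
        Finset.mem_sdiff.mpr ⟨hwnbu, hwnbx⟩
      rw [hz] at this
      exact Finset.mem_singleton.mp this
    intro r hr
    by_cases hrx : r ∈ G.neighborFinset x
    · exact Or.inl hrx
    · right
      have : r ∈ G.neighborFinset u \ G.neighborFinset x := Finset.mem_sdiff.mpr ⟨hr, hrx⟩
      rw [hz] at this
      rw [hwz]
      exact Finset.mem_singleton.mp this
  have hsub_w : ∀ r ∈ G.neighborFinset w, r ∈ G.neighborFinset x ∨ r = u := by
    have h1 : (G.neighborFinset w \ G.neighborFinset x).card = 1 := by
      have := Finset.card_inter_add_card_sdiff (G.neighborFinset w) (G.neighborFinset x)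
      rw [hwb, hdeg w] at this
      omega
    obtain ⟨z, hz⟩ := Finset.card_eq_one.mp h1
    have huz : u = z := by
      have : u ∈ G.neighborFinset w \ G.neighborFinset x :=
        Finset.mem_sdiff.mpr ⟨hunbw, hunbx⟩
      rw [hz] at this
      exact Finset.mem_singleton.mp this
    intro r hr
    by_cases hrx : r ∈ G.neighborFinset x
    · exact Or.inl hrx
    · right
      have : r ∈ G.neighborFinset w \ G.neighborFinset x := Finset.mem_sdiff.mpr ⟨hr, hrx⟩
      rw [hz] at this
      rw [huz]
      exact Finset.mem_singleton.mp this
  -- the unique vertex of N(x) \ N(u), resp. N(x) \ N(w)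
  have hyu' : (G.neighborFinset x \ G.neighborFinset u).card = 1 := by
    have := Finset.card_inter_add_card_sdiff (G.neighborFinset x) (G.neighborFinset u)
    rw [Finset.inter_comm, hub, hdeg x] at this
    omega
  obtain ⟨yu, hyu⟩ := Finset.card_eq_one.mp hyu'
  have hyu_mem : yu ∈ G.neighborFinset x ∧ yu ∉ G.neighborFinset u := by
    have : yu ∈ G.neighborFinset x \ G.neighborFinset u := by
      rw [hyu]; exact Finset.mem_singleton_self yu
    exact Finset.mem_sdiff.mp this
  have hmem_u : ∀ p ∈ G.neighborFinset x, p ≠ yu → p ∈ G.neighborFinset u := by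
    intro p hp hpne
    by_contra h
    have : p ∈ G.neighborFinset x \ G.neighborFinset u := Finset.mem_sdiff.mpr ⟨hp, h⟩
    rw [hyu] at this
    exact hpne (Finset.mem_singleton.mp this)
  have hyw' : (G.neighborFinset x \ G.neighborFinset w).card = 1 := by
    have := Finset.card_inter_add_card_sdiff (G.neighborFinset x) (G.neighborFinset w)
    rw [Finset.inter_comm, hwb, hdeg x] at this
    omega
  obtain ⟨yw, hyw⟩ := Finset.card_eq_one.mp hyw'
  have hyw_mem : yw ∈ G.neighborFinset x ∧ yw ∉ G.neighborFinset w := by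
    have : yw ∈ G.neighborFinset x \ G.neighborFinset w := by
      rw [hyw]; exact Finset.mem_singleton_self yw
    exact Finset.mem_sdiff.mp this
  have hmem_w : ∀ p ∈ G.neighborFinset x, p ≠ yw → p ∈ G.neighborFinset w := by
    intro p hp hpne
    by_contra h
    have : p ∈ G.neighborFinset x \ G.neighborFinset w := Finset.mem_sdiff.mpr ⟨hp, h⟩
    rw [hyw] at this
    exact hpne (Finset.mem_singleton.mp this)
  -- common neighbours with x of any neighbour of x is a
  have hpx_a : ∀ p ∈ G.neighborFinset x, (G.neighborFinset p ∩ G.neighborFinset x).card = a := by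
    intro p hp
    have hxp : G.Adj x p := (G.mem_neighborFinset x p).mp hp
    rcases hD p x hxp.ne' with h' | h'
    · exfalso
      exact hxA p (Finset.mem_filter.mpr ⟨Finset.mem_univ p, hxp.ne', h'⟩) hxp
    · rw [hcnbrs] at h'
      exact h'
  -- common neighbours of p with u (resp. w) is a, for p adjacent to both x and u
  have hcna : ∀ p q : V, G.Adj p q → G.Adj x p → x ≠ q → ¬ G.Adj x q →
      (G.neighborFinset p ∩ G.neighborFinset q).card = a := by
    intro p q hpq hxp hxq hnxq
    rcases hD p q hpq.ne with h' | h'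
    · exfalso
      have hxq' : x ∈ G.neighborFinset q :=
        deza_trick G hreg hk hpq h' ((G.mem_neighborFinset p x).mpr hxp.symm) hxq
      exact hnxq ((G.mem_neighborFinset q x).mp hxq').symm
    · rw [hcnbrs] at h'
      exact h'
  by_cases hyy : yu = yw
  · -- Case 1: same missing vertex y
    have hkey : ∀ p ∈ (G.neighborFinset x).erase yu, yu ∈ G.neighborFinset p := by
      intro p hp
      obtain ⟨hpyu, hpx⟩ := Finset.mem_erase.mp hp
      have hpu : p ∈ G.neighborFinset u := hmem_u p hpx hpyu
      have hpw : p ∈ G.neighborFinset w := hmem_w p hpx (hyy ▸ hpyu)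
      have hadj_pu : G.Adj p u := ((G.mem_neighborFinset u p).mp hpu).symm
      have hadj_pw : G.Adj p w := ((G.mem_neighborFinset w p).mp hpw).symm
      have hxp : G.Adj x p := (G.mem_neighborFinset x p).mp hpx
      have hA : (G.neighborFinset p ∩ G.neighborFinset u).card = a :=
        hcna p u hadj_pu hxp (Ne.symm hux) hnxu
      have hB : (G.neighborFinset p ∩ G.neighborFinset x).card = a := hpx_a p hpx
      have hset : G.neighborFinset p ∩ G.neighborFinset u =
          insert w ((G.neighborFinset p ∩ G.neighborFinset x).erase yu) := by
        ext q
        constructor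
        · intro hq
          obtain ⟨hq1, hq2⟩ := Finset.mem_inter.mp hq
          rcases hsub_u q hq2 with hq3 | rfl
          · refine Finset.mem_insert_of_mem (Finset.mem_erase.mpr ⟨?_, Finset.mem_inter.mpr ⟨hq1, hq3⟩⟩)
            rintro rfl
            exact hyu_mem.2 hq2
          · exact Finset.mem_insert_self _ _
        · intro hq
          rcases Finset.mem_insert.mp hq with rfl | hq'
          · exact Finset.mem_inter.mpr ⟨(G.mem_neighborFinset p q).mpr hadj_pw, hwnbu⟩
          · obtain ⟨hqyu, hq''⟩ := Finset.mem_erase.mp hq'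
            obtain ⟨h1, h2⟩ := Finset.mem_inter.mp hq''
            exact Finset.mem_inter.mpr ⟨h1, hmem_u q h2 hqyu⟩
      have hwnot : w ∉ (G.neighborFinset p ∩ G.neighborFinset x).erase yu := by
        intro h
        exact hwnbx (Finset.mem_inter.mp (Finset.mem_erase.mp h).2).2
      have hcard1 : (G.neighborFinset p ∩ G.neighborFinset u).card =
          ((G.neighborFinset p ∩ G.neighborFinset x).erase yu).card + 1 := by
        rw [hset, Finset.card_insert_of_notMem hwnot]
      by_contra hnyu
      have herase : (G.neighborFinset p ∩ G.neighborFinset x).erase yu =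
          G.neighborFinset p ∩ G.neighborFinset x :=
        Finset.erase_eq_of_notMem (fun h => hnyu (Finset.mem_inter.mp h).1)
      rw [herase, hB, hA] at hcard1
      omega
    -- so yu is adjacent to all of N(x) \ {yu}, whence |N(yu) ∩ N(x)| ≥ b
    have hsub2 : (G.neighborFinset x).erase yu ⊆ G.neighborFinset yu ∩ G.neighborFinset x := by
      intro p hp
      refine Finset.mem_inter.mpr ⟨?_, (Finset.mem_erase.mp hp).2⟩
      have := hkey p hp
      exact (G.mem_neighborFinset yu p).mpr ((G.mem_neighborFinset p yu).mp this).symm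
    have hge : b ≤ (G.neighborFinset yu ∩ G.neighborFinset x).card := by
      have h1 : ((G.neighborFinset x).erase yu).card = b := by
        rw [Finset.card_erase_of_mem hyu_mem.1, hdeg x]
        omega
      rw [← h1]
      exact Finset.card_le_card hsub2
    have hyux : G.Adj x yu := (G.mem_neighborFinset x yu).mp hyu_mem.1
    rcases hD yu x hyux.ne' with h' | h'
    · exact hxA yu (Finset.mem_filter.mpr ⟨Finset.mem_univ yu, hyux.ne', h'⟩) hyux
    · rw [hcnbrs] at h'
      omega
  · -- Case 2: yu ≠ yw
    -- first, a = b - 1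
    have hset2 : G.neighborFinset u ∩ G.neighborFinset w =
        ((G.neighborFinset x).erase yu).erase yw := by
      ext q
      constructor
      · intro hq
        obtain ⟨hq1, hq2⟩ := Finset.mem_inter.mp hq
        rcases hsub_u q hq1 with hq3 | hqw
        · refine Finset.mem_erase.mpr ⟨?_, Finset.mem_erase.mpr ⟨?_, hq3⟩⟩
          · rintro rfl; exact hyw_mem.2 hq2
          · rintro rfl; exact hyu_mem.2 hq1
        · rw [hqw] at hq2; exact absurd hq2 (G.notMem_neighborFinset_self w)
      · intro hq
        obtain ⟨hqyw, hq'⟩ := Finset.mem_erase.mp hq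
        obtain ⟨hqyu, hqx⟩ := Finset.mem_erase.mp hq'
        exact Finset.mem_inter.mpr ⟨hmem_u q hqx hqyu, hmem_w q hqx hqyw⟩
    have hcard2 : (G.neighborFinset u ∩ G.neighborFinset w).card = b - 1 := by
      rw [hset2, Finset.card_erase_of_mem
        (Finset.mem_erase.mpr ⟨fun h => hyy h.symm, hyw_mem.1⟩),
        Finset.card_erase_of_mem hyu_mem.1, hdeg x]
      omega
    have ha_eq : a = b - 1 := by
      rcases hD u w huw with h' | h'
      · rw [hcnbrs, hcard2] at h'
        omega
      · rw [hcnbrs, hcard2] at h'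
        omega
    by_cases hb2 : 2 ≤ b
    · -- counting contradiction
      obtain ⟨p, hp⟩ : (((G.neighborFinset x).erase yu).erase yw).Nonempty := by
        apply Finset.card_pos.mp
        rw [← hset2, hcard2]
        omega
      obtain ⟨hpyw, hp'⟩ := Finset.mem_erase.mp hp
      obtain ⟨hpyu, hpx⟩ := Finset.mem_erase.mp hp'
      have hpu : p ∈ G.neighborFinset u := hmem_u p hpx hpyu
      have hpw : p ∈ G.neighborFinset w := hmem_w p hpx hpyw
      have hxp : G.Adj x p := (G.mem_neighborFinset x p).mp hpx
      have hB : (G.neighborFinset p ∩ G.neighborFinset x).card = a := hpx_a p hpx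
      have hbig : (G.neighborFinset p ∩ G.neighborFinset x) ∪ {x, u, w} ⊆
          G.neighborFinset p := by
        intro q hq
        rcases Finset.mem_union.mp hq with hq' | hq'
        · exact (Finset.mem_inter.mp hq').1
        · rcases Finset.mem_insert.mp hq' with rfl | hq''
          · exact (G.mem_neighborFinset p q).mpr hxp.symm
          · rcases Finset.mem_insert.mp hq'' with hqu | hq'''
            · rw [hqu]
              exact (G.mem_neighborFinset p u).mpr ((G.mem_neighborFinset u p).mp hpu).symm
            · rw [Finset.mem_singleton.mp hq''']
              exact (G.mem_neighborFinset p w).mpr ((G.mem_neighborFinset w p).mp hpw).symm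
      have hdisj : Disjoint (G.neighborFinset p ∩ G.neighborFinset x) ({x, u, w} : Finset V) := by
        rw [Finset.disjoint_right]
        intro q hq hq'
        have hqx : q ∈ G.neighborFinset x := (Finset.mem_inter.mp hq').2
        rcases Finset.mem_insert.mp hq with rfl | hq''
        · exact G.notMem_neighborFinset_self q hqx
        · rcases Finset.mem_insert.mp hq'' with rfl | hq'''
          · exact hunbx hqx
          · rw [Finset.mem_singleton.mp hq'''] at hqx
            exact hwnbx hqx
      have hc3 : ({x, u, w} : Finset V).card = 3 := by
        rw [Finset.card_insert_of_notMem, Finset.card_insert_of_notMem, Finset.card_singleton]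
        · simpa using huw
        · simp only [Finset.mem_insert, Finset.mem_singleton]
          push_neg
          exact ⟨Ne.symm hux, Ne.symm hwx⟩
      have := Finset.card_le_card hbig
      rw [Finset.card_union_of_disjoint hdisj, hB, hc3, hdeg p] at this
      omega
    · -- b = 1, a = 0, k = 2 : G would be a strongly regular graph with parameters (n, 2, 0, 1)
      have hb1 : b = 1 := by omega
      have ha0 : a = 0 := by omega
      have hk2 : k = 2 := by omega
      refine hnsrg ⟨0, 1, hcard, hreg, ?_, ?_⟩
      · -- adjacent vertices have no common neighbour
        intro v w' hvw'
        rw [card_commonNeighbors_eq_commonNbrs]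
        rcases hD v w' hvw'.ne with h' | h'
        · exfalso
          -- a triangle exists
          obtain ⟨r, hr⟩ : (G.neighborFinset v ∩ G.neighborFinset w').Nonempty := by
            apply Finset.card_pos.mp
            rw [← hcnbrs, h']
            omega
          obtain ⟨hrv, hrw⟩ := Finset.mem_inter.mp hr
          have havr : G.Adj v r := (G.mem_neighborFinset v r).mp hrv
          have hawr : G.Adj w' r := (G.mem_neighborFinset w' r).mp hrw
          have hvw'ne : v ≠ w' := hvw'.ne
          have hwrne : w' ≠ r := hawr.ne
          have hvrne : v ≠ r := havr.ne
          have hnbv : G.neighborFinset v = {w', r} := by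
            symm
            apply Finset.eq_of_subset_of_card_le
            · intro q hq
              rcases Finset.mem_insert.mp hq with rfl | hq'
              · exact (G.mem_neighborFinset v q).mpr hvw'
              · rw [Finset.mem_singleton.mp hq']
                exact hrv
            · rw [hdeg v, Finset.card_insert_of_notMem (by simpa using hwrne),
                Finset.card_singleton]
              omega
          have hnbw : G.neighborFinset w' = {v, r} := by
            symm
            apply Finset.eq_of_subset_of_card_le
            · intro q hq
              rcases Finset.mem_insert.mp hq with rfl | hq'
              · exact (G.mem_neighborFinset w' q).mpr hvw'.symm
              · rw [Finset.mem_singleton.mp hq']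
                exact hrw
            · rw [hdeg w', Finset.card_insert_of_notMem (by simpa using hvrne),
                Finset.card_singleton]
              omega
          have hnbr : G.neighborFinset r = {v, w'} := by
            symm
            apply Finset.eq_of_subset_of_card_le
            · intro q hq
              rcases Finset.mem_insert.mp hq with rfl | hq'
              · exact (G.mem_neighborFinset r q).mpr havr.symm
              · rw [Finset.mem_singleton.mp hq']
                exact (G.mem_neighborFinset r w').mpr hawr.symm
            · rw [hdeg r, Finset.card_insert_of_notMem (by simpa using hvw'ne),
                Finset.card_singleton]
              omega
          -- the triangle is a connected component, so V = {v, w', r}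
          have hclT : ∀ s ∈ ({v, w', r} : Finset V), G.neighborFinset s ⊆ ({v, w', r} : Finset V) := by
            intro s hs
            rcases Finset.mem_insert.mp hs with rfl | hs'
            · rw [hnbv]; intro q hq; simp only [Finset.mem_insert, Finset.mem_singleton] at hq ⊢; tauto
            · rcases Finset.mem_insert.mp hs' with rfl | hs''
              · rw [hnbw]; intro q hq; simp only [Finset.mem_insert, Finset.mem_singleton] at hq ⊢; tauto
              · rw [Finset.mem_singleton.mp hs'']
                rw [hnbr]; intro q hq; simp only [Finset.mem_insert, Finset.mem_singleton] at hq ⊢; tauto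
          have hwalk : ∀ c d : V, G.Walk c d → c ∈ ({v, w', r} : Finset V) → d ∈ ({v, w', r} : Finset V) := by
            intro c d wlk
            induction wlk with
            | nil => exact id
            | @cons c' e d' h p ih =>
              intro hc
              exact ih (hclT c' hc ((G.mem_neighborFinset c' e).mpr h))
          obtain ⟨wk1⟩ := hconn.preconnected v x
          have hxT : x ∈ ({v, w', r} : Finset V) := hwalk v x wk1 (Finset.mem_insert_self _ _)
          obtain ⟨wk2⟩ := hconn.preconnected v u
          have huT : u ∈ ({v, w', r} : Finset V) := hwalk v u wk2 (Finset.mem_insert_self _ _)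
          -- any two distinct vertices of T are adjacent, but x and u are not
          have hadjT : ∀ s ∈ ({v, w', r} : Finset V), ∀ t ∈ ({v, w', r} : Finset V), s ≠ t → G.Adj s t := by
            intro s hs t ht hst
            simp only [Finset.mem_insert, Finset.mem_singleton] at hs ht
            rcases hs with rfl | rfl | rfl <;> rcases ht with rfl | rfl | rfl <;>
              first
                | exact absurd rfl hst
                | exact hvw' | exact hvw'.symm | exact havr | exact havr.symm
                | exact hawr | exact hawr.symm
          exact hnxu (hadjT x hxT u huT (Ne.symm hux))
        · rw [h', ha0]
      · -- distinct non-adjacent vertices have exactly one common neighbour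
        intro v w' hvw' hnadj
        rw [card_commonNeighbors_eq_commonNbrs]
        rcases hD v w' hvw' with h' | h'
        · rw [h', hb1]
        · exfalso
          -- distance 2 gives a common neighbour
          have hdne : G.dist v w' ≠ 0 :=
            SimpleGraph.dist_ne_zero_iff_ne_and_reachable.mpr ⟨hvw', hconn.preconnected v w'⟩
          have hd1 : G.dist v w' ≠ 1 := fun h =>
            hnadj (SimpleGraph.dist_eq_one_iff_adj.mp h)
          have hdvw : G.dist v w' = 2 := by
            have := hd2 v w'
            omega
          obtain ⟨wlk, hlen⟩ := SimpleGraph.exists_walk_of_dist_ne_zero hdne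
          rw [hdvw] at hlen
          cases wlk with
          | nil => simp at hlen
          | @cons _ m _ h1 p =>
            cases p with
            | nil => simp at hlen
            | @cons _ m2 _ h2 p' =>
              cases p' with
              | nil =>
                have : m ∈ G.neighborFinset v ∩ G.neighborFinset w' :=
                  Finset.mem_inter.mpr ⟨(G.mem_neighborFinset v m).mpr h1,
                    (G.mem_neighborFinset w' m).mpr h2.symm⟩
                have hpos : 0 < (G.neighborFinset v ∩ G.neighborFinset w').card :=
                  Finset.card_pos.mpr ⟨m, this⟩
                rw [← hcnbrs, h', ha0] at hpos
                omega
              | cons h3 p'' =>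
                simp only [SimpleGraph.Walk.length_cons] at hlen
                omega
end

section
/- Let Γ be a strictly Deza graph with parameters (n, k, b, a) with k = b + 1 and β(v) > 1 for every vertex v. Suppose x is a vertex of type (A), xᵢ ∈ B(x), y ∈ N(x) is not adjacent to xᵢ, and z is a vertex at distance 2 from x that is adjacent to xᵢ. Then (1) N(x) ∩ N(y) = N(x) ∩ N(z), and (2) for every vertex v ∈ N(x) ∩ N(y), B[v] ⊆ N(x) ∩ N(y). -/
open Finset SimpleGraph

universe u v

section Aux
variable {V : Type u} [Fintype V] [DecidableEq V] (G : SimpleGraph V) [DecidableRel G.Adj]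

lemma cardCN (u v : V) : Fintype.card (G.commonNeighbors u v) = commonNbrs G u v := by
  rw [commonNbrs]
  have : G.neighborFinset u ∩ G.neighborFinset v = (G.commonNeighbors u v).toFinset := by
    ext w; rw [Set.mem_toFinset]; simp [commonNeighbors, neighborFinset]
  rw [this, Set.toFinset_card]

lemma cnComm (u v : V) : commonNbrs G u v = commonNbrs G v u := by
  rw [commonNbrs, commonNbrs, inter_comm]

omit [Fintype V] [DecidableEq V] in
lemma finsingle {s : Finset V} {w : V} [DecidableEq V] (h1 : s.card = 1) (hw : w ∈ s) : s = {w} := by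
  obtain ⟨a, ha⟩ := Finset.card_eq_one.1 h1
  subst ha; simp_all

omit [Fintype V] [DecidableEq V] [DecidableRel G.Adj] in
lemma walkmem (S : Finset V) (hcl : ∀ s ∈ S, ∀ t, G.Adj s t → t ∈ S) :
    ∀ {p q : V}, G.Walk p q → p ∈ S → q ∈ S := by
  intro p q w
  induction w with
  | nil => exact id
  | cons h _ ih => exact fun hp => ih (hcl _ hp _ h)

omit [Fintype V] in
lemma pair_inter_empty {a1 a2 b1 b2 : V} (h11 : a1 ≠ b1) (h12 : a1 ≠ b2)
    (h21 : a2 ≠ b1) (h22 : a2 ≠ b2) : ({a1, a2} : Finset V) ∩ {b1, b2} = ∅ := by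
  ext t
  simp only [Finset.mem_inter, Finset.mem_insert, Finset.mem_singleton,
    Finset.notMem_empty, iff_false]
  rintro ⟨rfl | rfl, rfl | rfl⟩ <;> simp_all

omit [Fintype V] in
lemma pair_inter_single {a1 a2 b2 : V} (h1 : a2 ≠ a1) (h2 : a2 ≠ b2) :
    ({a1, a2} : Finset V) ∩ {a1, b2} = {a1} := by
  ext t
  simp only [Finset.mem_inter, Finset.mem_insert, Finset.mem_singleton]
  constructor
  · rintro ⟨ha | ha, hb | hb⟩
    · exact ha
    · exact ha
    · exact hb
    · exact absurd (ha.symm.trans hb) h2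
  · rintro rfl; simp

lemma cnDef (u v : V) :
    commonNbrs G u v = (G.neighborFinset u ∩ G.neighborFinset v).card := rfl

end Aux

set_option maxHeartbeats 800000 in
lemma c5case {V : Type u} [Fintype V] [DecidableEq V] (G : SimpleGraph V)
    [DecidableRel G.Adj] {n k : ℕ} (hcard : Fintype.card V = n)
    (hreg : G.IsRegularOfDegree k) (hconn : G.Connected) (x y y2 z xi : V)
    (hx5 : G.neighborFinset x = {y, y2}) (hy5 : G.neighborFinset y = {z, x})
    (hy25 : G.neighborFinset y2 = {x, xi}) (hz5 : G.neighborFinset z = {y, xi})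
    (hxi5 : G.neighborFinset xi = {y2, z})
    (nxy : x ≠ y) (nxy2 : x ≠ y2) (nxz : x ≠ z) (nxxi : x ≠ xi)
    (nyy2 : y ≠ y2) (nyz : y ≠ z) (nyxi : y ≠ xi)
    (ny2z : y2 ≠ z) (ny2xi : y2 ≠ xi) (nzxi : z ≠ xi) :
    ∃ ℓ μ : ℕ, G.IsSRGWith n k ℓ μ := by
  have nyx : y ≠ x := nxy.symm
  have nzx : z ≠ x := nxz.symm
  have nxix : xi ≠ x := nxxi.symm
  have ny2x : y2 ≠ x := nxy2.symm
  have nzy : z ≠ y := nyz.symm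
  have nxiy : xi ≠ y := nyxi.symm
  have ny2y : y2 ≠ y := nyy2.symm
  have nzy2 : z ≠ y2 := ny2z.symm
  have nxiy2 : xi ≠ y2 := ny2xi.symm
  have nxiz : xi ≠ z := nzxi.symm
  have hAxy : G.Adj x y := by rw [← mem_neighborFinset, hx5]; simp
  have hAxy2 : G.Adj x y2 := by rw [← mem_neighborFinset, hx5]; simp
  have hAyz : G.Adj y z := by rw [← mem_neighborFinset, hy5]; simp
  have hAzxi : G.Adj z xi := by rw [← mem_neighborFinset, hz5]; simp
  have hAy2xi : G.Adj y2 xi := by rw [← mem_neighborFinset, hy25]; simp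
  have hcl : ∀ s ∈ ({x, y, y2, z, xi} : Finset V), ∀ t, G.Adj s t →
      t ∈ ({x, y, y2, z, xi} : Finset V) := by
    intro s hs t hadj
    have hm : t ∈ G.neighborFinset s := (mem_neighborFinset _ _ _).2 hadj
    simp only [Finset.mem_insert, Finset.mem_singleton] at hs ⊢
    rcases hs with rfl | rfl | rfl | rfl | rfl
    · rw [hx5] at hm
      simp only [Finset.mem_insert, Finset.mem_singleton] at hm
      tauto
    · rw [hy5] at hm
      simp only [Finset.mem_insert, Finset.mem_singleton] at hm
      tauto
    · rw [hy25] at hm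
      simp only [Finset.mem_insert, Finset.mem_singleton] at hm
      tauto
    · rw [hz5] at hm
      simp only [Finset.mem_insert, Finset.mem_singleton] at hm
      tauto
    · rw [hxi5] at hm
      simp only [Finset.mem_insert, Finset.mem_singleton] at hm
      tauto
  have hall : ∀ v : V, v ∈ ({x, y, y2, z, xi} : Finset V) := by
    intro v
    exact (hconn x v).elim fun p => walkmem G _ hcl p (by simp)
  refine ⟨0, 1, ⟨hcard, hreg, ?_, ?_⟩⟩
  · intro u v huv
    have hm : v ∈ G.neighborFinset u := (mem_neighborFinset _ _ _).2 huv
    rw [cardCN, cnDef]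
    have hu := hall u
    have hv := hall v
    simp only [Finset.mem_insert, Finset.mem_singleton] at hu hv
    rcases hu with rfl | rfl | rfl | rfl | rfl <;>
      rcases hv with rfl | rfl | rfl | rfl | rfl
    · exact absurd huv (G.loopless.irrefl _)
    · rw [hx5, hy5, pair_inter_empty nyz nyx ny2z ny2x, Finset.card_empty]
    · rw [hx5, hy25, pair_inter_empty nyx nyxi ny2x ny2xi, Finset.card_empty]
    · rw [hx5] at hm
      exact absurd hm (by simp [nzy, nzy2])
    · rw [hx5] at hm
      exact absurd hm (by simp [nxiy, nxiy2])
    · rw [hy5, hx5, pair_inter_empty nzy nzy2 nxy nxy2, Finset.card_empty]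
    · exact absurd huv (G.loopless.irrefl _)
    · rw [hy5] at hm
      exact absurd hm (by simp [ny2z, ny2x])
    · rw [hy5, hz5, pair_inter_empty nzy nzxi nxy nxxi, Finset.card_empty]
    · rw [hy5] at hm
      exact absurd hm (by simp [nxiz, nxix])
    · rw [hy25, hx5, pair_inter_empty nxy nxy2 nxiy nxiy2, Finset.card_empty]
    · rw [hy25] at hm
      exact absurd hm (by simp [nyx, nyxi])
    · exact absurd huv (G.loopless.irrefl _)
    · rw [hy25] at hm
      exact absurd hm (by simp [nzx, nzxi])
    · rw [hy25, hxi5, pair_inter_empty nxy2 nxz nxiy2 nxiz, Finset.card_empty]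
    · rw [hz5] at hm
      exact absurd hm (by simp [nxy, nxxi])
    · rw [hz5, hy5, pair_inter_empty nyz nyx nxiz nxix, Finset.card_empty]
    · rw [hz5] at hm
      exact absurd hm (by simp [ny2y, ny2xi])
    · exact absurd huv (G.loopless.irrefl _)
    · rw [hz5, hxi5, pair_inter_empty nyy2 nyz nxiy2 nxiz, Finset.card_empty]
    · rw [hxi5] at hm
      exact absurd hm (by simp [nxy2, nxz])
    · rw [hxi5] at hm
      exact absurd hm (by simp [nyy2, nyz])
    · rw [hxi5, hy25, pair_inter_empty ny2x ny2xi nzx nzxi, Finset.card_empty]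
    · rw [hxi5, hz5, pair_inter_empty ny2y ny2xi nzy nzxi, Finset.card_empty]
    · exact absurd huv (G.loopless.irrefl _)
  · intro u v hne hnadj
    rw [cardCN, cnDef]
    have hu := hall u
    have hv := hall v
    simp only [Finset.mem_insert, Finset.mem_singleton] at hu hv
    rcases hu with rfl | rfl | rfl | rfl | rfl <;>
      rcases hv with rfl | rfl | rfl | rfl | rfl
    · exact absurd rfl hne
    · exact absurd hAxy hnadj
    · exact absurd hAxy2 hnadj
    · rw [hx5, hz5, pair_inter_single ny2y ny2xi, Finset.card_singleton]
    · rw [hx5, hxi5, Finset.pair_comm y y2, pair_inter_single nyy2 nyz, Finset.card_singleton]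
    · exact absurd hAxy.symm hnadj
    · exact absurd rfl hne
    · rw [hy5, hy25, Finset.pair_comm z x, pair_inter_single nzx nzxi, Finset.card_singleton]
    · exact absurd hAyz hnadj
    · rw [hy5, hxi5, Finset.pair_comm y2 z, pair_inter_single nxz nxy2, Finset.card_singleton]
    · exact absurd hAxy2.symm hnadj
    · rw [hy25, hy5, Finset.pair_comm z x, pair_inter_single nxix nxiz, Finset.card_singleton]
    · exact absurd rfl hne
    · rw [hy25, hz5, Finset.pair_comm x xi, Finset.pair_comm y xi, pair_inter_single nxxi nxy, Finset.card_singleton]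
    · exact absurd hAy2xi hnadj
    · rw [hz5, hx5, pair_inter_single nxiy nxiy2, Finset.card_singleton]
    · exact absurd hAyz.symm hnadj
    · rw [hz5, hy25, Finset.pair_comm y xi, Finset.pair_comm x xi, pair_inter_single nyxi nyx, Finset.card_singleton]
    · exact absurd rfl hne
    · exact absurd hAzxi hnadj
    · rw [hxi5, hx5, Finset.pair_comm y y2, pair_inter_single nzy2 nzy, Finset.card_singleton]
    · rw [hxi5, hy5, Finset.pair_comm y2 z, pair_inter_single ny2z ny2x, Finset.card_singleton]
    · exact absurd hAy2xi.symm hnadj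
    · exact absurd hAzxi.symm hnadj
    · exact absurd rfl hne

set_option maxHeartbeats 1600000 in
theorem stmt9 {V : Type u} [Fintype V] [DecidableEq V] (G : SimpleGraph V)
    [DecidableRel G.Adj] (n k b a : ℕ)
    (hG : IsStrictlyDezaGraph G n k b a) (hk : k = b + 1)
    (hβ : ∀ v : V, 1 < (dezaB G b v).card) :
    ∀ x xi y z : V, IsTypeA G b x → xi ∈ dezaB G b x →
      y ∈ G.neighborFinset x → ¬ G.Adj y xi → G.dist x z = 2 → G.Adj z xi →
      G.neighborFinset x ∩ G.neighborFinset y =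
        G.neighborFinset x ∩ G.neighborFinset z ∧
      ∀ w ∈ G.neighborFinset x ∩ G.neighborFinset y,
        dezaBc G b w ⊆ G.neighborFinset x ∩ G.neighborFinset y := by
  obtain ⟨⟨hne_bot, hcard, hreg, hab, hDeza⟩, hconn, hdiam, hd2, hnsrg⟩ := hG
  intro x xi y z hxA hxiB hyN hyxiAdj hdxz hzxi
  have hka : ∀ v : V, (G.neighborFinset v).card = k := fun v => by
    rw [card_neighborFinset_eq_degree]; exact hreg v
  -- a ≠ b
  have hanb : a ≠ b := by
    intro h
    subst h
    exact hnsrg ⟨a, a, hcard, hreg,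
      fun v w hvw => by rw [cardCN]; rcases hDeza v w hvw.ne with h | h <;> exact h,
      fun v w hvw hnadj => by rw [cardCN]; rcases hDeza v w hvw with h | h <;> exact h⟩
  -- every neighbour of x has a common neighbours with x
  have hNa : ∀ u ∈ G.neighborFinset x, commonNbrs G u x = a := by
    intro u hu
    have hune : u ≠ x := fun h => by
      subst h; exact G.irrefl ((mem_neighborFinset _ _ _).1 hu)
    rcases hDeza u x hune with h | h
    · exfalso
      have : u ∈ dezaB G b x ∩ G.neighborFinset x := by
        rw [mem_inter, dezaB, mem_filter]
        exact ⟨⟨mem_univ u, hune, h⟩, hu⟩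
      rw [IsTypeA] at hxA
      simp [hxA] at this
    · exact h
  rw [dezaB, mem_filter] at hxiB
  obtain ⟨-, hxinex, hxib⟩ := hxiB
  have hxinx : xi ∉ G.neighborFinset x := by
    intro h
    have := hNa xi h
    rw [this] at hxib; exact hanb hxib
  -- z basics
  have hzne : z ≠ x := fun h => by subst h; simp [SimpleGraph.dist_self] at hdxz
  have hznx : z ∉ G.neighborFinset x := by
    rw [mem_neighborFinset]
    intro h
    have : G.dist x z = 1 := SimpleGraph.dist_eq_one_iff_adj.2 h
    omega
  have hyne : y ≠ x := fun h => by
    subst h; exact G.irrefl ((mem_neighborFinset _ _ _).1 hyN)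
  have hynxi : y ∉ G.neighborFinset xi := by
    rw [mem_neighborFinset]; intro h; exact hyxiAdj h.symm
  have hzxi' : z ∈ G.neighborFinset xi := (mem_neighborFinset _ _ _).2 hzxi.symm
  -- N(x) \ N(xi) = {y},  N(xi) \ N(x) = {z}
  have hcxix : (G.neighborFinset xi ∩ G.neighborFinset x).card = b := hxib
  have hcxxi : (G.neighborFinset x ∩ G.neighborFinset xi).card = b := by
    rw [inter_comm]; exact hcxix
  have hsd1 : G.neighborFinset x \ G.neighborFinset xi = {y} := by
    apply finsingle
    · have := Finset.card_sdiff_add_card_inter (G.neighborFinset x) (G.neighborFinset xi)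
      rw [hcxxi, hka x, hk] at this; omega
    · rw [mem_sdiff]; exact ⟨hyN, hynxi⟩
  have hsd2 : G.neighborFinset xi \ G.neighborFinset x = {z} := by
    apply finsingle
    · have := Finset.card_sdiff_add_card_inter (G.neighborFinset xi) (G.neighborFinset x)
      rw [hcxix, hka xi, hk] at this; omega
    · rw [mem_sdiff]; exact ⟨hzxi', hznx⟩
  have hNxi : G.neighborFinset xi = (G.neighborFinset x \ {y}) ∪ {z} := by
    have h1 : G.neighborFinset x ∩ G.neighborFinset xi = G.neighborFinset x \ {y} := by
      rw [← hsd1, Finset.sdiff_sdiff_self_left]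
    ext u
    simp only [mem_union, mem_sdiff, mem_singleton]
    constructor
    · intro hu
      by_cases hux : u ∈ G.neighborFinset x
      · left
        have : u ∈ G.neighborFinset x ∩ G.neighborFinset xi := mem_inter.2 ⟨hux, hu⟩
        rw [h1, mem_sdiff, mem_singleton] at this; exact this
      · right
        have : u ∈ G.neighborFinset xi \ G.neighborFinset x := mem_sdiff.2 ⟨hu, hux⟩
        rw [hsd2, mem_singleton] at this; exact this
    · rintro (⟨h1', h2'⟩ | rfl)
      · have : u ∈ G.neighborFinset x \ {y} := mem_sdiff.2 ⟨h1', by simpa using h2'⟩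
        rw [← h1, mem_inter] at this; exact this.2
      · exact hzxi'
  have hmemxi : ∀ u, u ∈ G.neighborFinset xi ↔ ((u ∈ G.neighborFinset x ∧ u ≠ y) ∨ u = z) := by
    intro u
    rw [hNxi]
    simp only [mem_union, mem_sdiff, mem_singleton]
  -- L1: a neighbour of x adjacent to xi cannot have b common neighbours with xi
  have L1 : ∀ w, G.Adj x w → w ∈ G.neighborFinset xi → commonNbrs G w xi ≠ b := by
    intro w hxw hwxi hcb
    -- N(w) \ N(xi) = {xi}
    have hxiw : xi ∈ G.neighborFinset w := (mem_neighborFinset _ _ _).2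
      (((mem_neighborFinset _ _ _).1 hwxi).symm)
    have hxinxi : xi ∉ G.neighborFinset xi := by
      rw [mem_neighborFinset]; exact G.irrefl
    have hsd : G.neighborFinset w \ G.neighborFinset xi = {xi} := by
      apply finsingle
      · have := Finset.card_sdiff_add_card_inter (G.neighborFinset w) (G.neighborFinset xi)
        rw [commonNbrs] at hcb
        rw [hcb, hka w, hk] at this; omega
      · rw [mem_sdiff]; exact ⟨hxiw, hxinxi⟩
    have hxw' : x ∈ G.neighborFinset w := (mem_neighborFinset _ _ _).2 hxw.symm
    have : x ∉ G.neighborFinset w \ G.neighborFinset xi := by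
      rw [hsd, mem_singleton]; exact fun h => hxinex h.symm
    have hxnfxi : x ∈ G.neighborFinset xi := by
      rw [mem_sdiff] at this; tauto
    exact hxinx ((mem_neighborFinset _ _ _).2 ((mem_neighborFinset _ _ _).1 hxnfxi).symm)
  -- L2 : for w ∈ N(x) \ {y} : w ~ y iff w ~ z
  have L2 : ∀ w ∈ G.neighborFinset x, w ≠ y → (z ∈ G.neighborFinset w ↔ y ∈ G.neighborFinset w) := by
    intro w hw hwy
    have hwxi : w ∈ G.neighborFinset xi := (hmemxi w).2 (Or.inl ⟨hw, hwy⟩)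
    have hwnex : w ≠ xi := fun h => hxinx (h ▸ hw)
    have hcwxi : commonNbrs G w xi = a := by
      rcases hDeza w xi hwnex with h | h
      · exact absurd h (L1 w ((mem_neighborFinset _ _ _).1 hw) hwxi)
      · exact h
    have hdecomp : G.neighborFinset w ∩ G.neighborFinset xi =
        ((G.neighborFinset w ∩ G.neighborFinset x) \ {y}) ∪ (G.neighborFinset w ∩ {z}) := by
      rw [hNxi, Finset.inter_union_distrib_left, Finset.inter_sdiff_assoc]
    have hdisj : Disjoint ((G.neighborFinset w ∩ G.neighborFinset x) \ {y})
        (G.neighborFinset w ∩ {z}) := by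
      rw [Finset.disjoint_left]
      intro u hu hu2
      rw [mem_inter, mem_singleton] at hu2
      rw [mem_sdiff, mem_inter] at hu
      exact hznx (hu2.2 ▸ hu.1.2)
    have hAw : (G.neighborFinset w ∩ G.neighborFinset x).card = a := hNa w hw
    have hcards : a = ((G.neighborFinset w ∩ G.neighborFinset x) \ {y}).card
        + (G.neighborFinset w ∩ {z}).card := by
      rw [← Finset.card_union_of_disjoint hdisj, ← hdecomp, ← hcwxi]; rfl
    constructor
    · intro hz
      by_contra hy
      have h1 : (G.neighborFinset w ∩ G.neighborFinset x) \ {y}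
          = G.neighborFinset w ∩ G.neighborFinset x :=
        by rw [Finset.sdiff_singleton_eq_erase]; exact Finset.erase_eq_of_notMem (by rw [mem_inter]; tauto)
      have h2 : G.neighborFinset w ∩ {z} = {z} := Finset.inter_singleton_of_mem hz
      rw [h1, h2, hAw, Finset.card_singleton] at hcards; omega
    · intro hy
      by_contra hz
      have hyin : y ∈ G.neighborFinset w ∩ G.neighborFinset x := mem_inter.2 ⟨hy, hyN⟩
      have h1 : ((G.neighborFinset w ∩ G.neighborFinset x) \ {y}).card = a - 1 := by
        rw [Finset.card_sdiff_of_subset (by simpa using hyin), hAw, Finset.card_singleton]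
      have h2 : G.neighborFinset w ∩ {z} = ∅ := by
        rw [Finset.inter_singleton_of_notMem hz]
      have hapos : 0 < a := by
        rw [← hAw]; exact Finset.card_pos.2 ⟨y, hyin⟩
      rw [h1, h2, Finset.card_empty] at hcards; omega
  have hsymm : ∀ u v : V, v ∈ G.neighborFinset u → u ∈ G.neighborFinset v := by
    intro u v h
    rw [mem_neighborFinset] at h ⊢
    exact h.symm
  have hsplit : ∀ (s t : Finset V), s = (s ∩ t) ∪ (s \ t) := by
    intro s t
    ext u
    simp only [Finset.mem_union, Finset.mem_inter, Finset.mem_sdiff]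
    tauto
  have hxnxi : x ∉ G.neighborFinset xi := fun h => hxinx (hsymm xi x h)
  have hyny : y ∉ G.neighborFinset y := by rw [mem_neighborFinset]; exact G.irrefl
  have hxny : x ∈ G.neighborFinset y := hsymm x y hyN
  have hynexi : y ≠ xi := fun h => hxinx (h ▸ hyN)
  have hxnez : x ≠ z := fun h => hzne h.symm
  -- The key claim: y is not adjacent to z
  have hyz : ¬ G.Adj y z := by
    intro hyzadj
    have hzny : z ∈ G.neighborFinset y := (mem_neighborFinset _ _ _).2 hyzadj
    have hdecy : G.neighborFinset y ∩ G.neighborFinset xi =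
        (G.neighborFinset y ∩ G.neighborFinset x) ∪ {z} := by
      rw [hNxi, Finset.inter_union_distrib_left, ← Finset.inter_sdiff_assoc,
        Finset.sdiff_singleton_eq_erase, Finset.erase_eq_of_notMem (fun h => hyny (Finset.mem_inter.1 h).1),
        Finset.inter_singleton_of_mem hzny]
    have hcyx : (G.neighborFinset y ∩ G.neighborFinset x).card = a := hNa y hyN
    have hcyxi : commonNbrs G y xi = a + 1 := by
      rw [cnDef, hdecy, Finset.card_union_of_disjoint (by
        rw [Finset.disjoint_left]
        intro u hu hu2
        rw [Finset.mem_singleton] at hu2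
        exact hznx (hu2 ▸ (Finset.mem_inter.1 hu).2)), hcyx, Finset.card_singleton]
    have hba : b = a + 1 := by rcases hDeza y xi hynexi with h | h <;> omega
    have hsdy : G.neighborFinset y \ G.neighborFinset xi = {x} := by
      apply finsingle
      · have h1 := Finset.card_sdiff_add_card_inter (G.neighborFinset y) (G.neighborFinset xi)
        have h2 : (G.neighborFinset y ∩ G.neighborFinset xi).card = b := by
          rw [← cnDef G y xi, hcyxi, hba]
        rw [h2, hka y, hk] at h1
        omega
      · rw [mem_sdiff]; exact ⟨hxny, hxnxi⟩
    set M := G.neighborFinset x ∩ G.neighborFinset y with hMdef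
    have hMcomm : G.neighborFinset y ∩ G.neighborFinset x = M := by
      rw [hMdef, Finset.inter_comm]
    have hNy : G.neighborFinset y = (M ∪ {z}) ∪ {x} := by
      conv_lhs => rw [hsplit (G.neighborFinset y) (G.neighborFinset xi)]
      rw [hdecy, hsdy, hMcomm]
    have hMcard : M.card = a := by rw [hMdef, Finset.inter_comm]; exact hNa y hyN
    have hMz : ∀ w ∈ M, z ∈ G.neighborFinset w := by
      intro w hw
      obtain ⟨hwx, hwy⟩ := Finset.mem_inter.1 hw
      have hwney : w ≠ y := fun h => hyny (h ▸ hwy)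
      exact (L2 w hwx hwney).2 (hsymm y w hwy)
    have hynM : y ∉ M := fun h => hyny (Finset.mem_inter.1 h).2
    have hsub4 : M ∪ {y} ⊆ G.neighborFinset x ∩ G.neighborFinset z := by
      intro u hu
      rcases Finset.mem_union.1 hu with hu | hu
      · exact Finset.mem_inter.2 ⟨(Finset.mem_inter.1 hu).1, hsymm u z (hMz u hu)⟩
      · rw [Finset.mem_singleton] at hu
        subst hu
        exact Finset.mem_inter.2 ⟨hyN, hsymm u z hzny⟩
    have hcardMy : (M ∪ {y}).card = a + 1 := by
      rw [Finset.card_union_of_disjoint (by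
        rw [Finset.disjoint_right]
        intro u hu hu2
        rw [Finset.mem_singleton] at hu
        exact hynM (hu ▸ hu2)), hMcard, Finset.card_singleton]
    have hczx : (G.neighborFinset x ∩ G.neighborFinset z).card = b := by
      have hle := Finset.card_le_card hsub4
      rw [hcardMy] at hle
      rcases hDeza x z hxnez with h | h
      · exact h
      · have h' : (G.neighborFinset x ∩ G.neighborFinset z).card = a := h
        omega
    have heq4 : G.neighborFinset x ∩ G.neighborFinset z = M ∪ {y} :=
      (Finset.eq_of_subset_of_card_le hsub4 (by rw [hczx, hcardMy, hba])).symm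
    have hsd5card : (G.neighborFinset x \ G.neighborFinset z).card = 1 := by
      have h1 := Finset.card_sdiff_add_card_inter (G.neighborFinset x) (G.neighborFinset z)
      rw [hczx, hka x, hk] at h1
      omega
    obtain ⟨y2, hy2⟩ := Finset.card_eq_one.1 hsd5card
    have hy2mem : y2 ∈ G.neighborFinset x \ G.neighborFinset z := by
      rw [hy2]; exact Finset.mem_singleton_self _
    obtain ⟨hy2x, hy2nz⟩ := Finset.mem_sdiff.1 hy2mem
    have hNx5 : G.neighborFinset x = (M ∪ {y}) ∪ {y2} := by
      conv_lhs => rw [hsplit (G.neighborFinset x) (G.neighborFinset z)]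
      rw [heq4, hy2]
    have hy2ney : y2 ≠ y := fun h => hy2nz (h ▸ hsymm y z hzny)
    have hy2nM : y2 ∉ M := by
      intro h
      have h2 : y2 ∈ G.neighborFinset x ∩ G.neighborFinset z := by
        rw [heq4]; exact Finset.mem_union_left _ h
      exact hy2nz (Finset.mem_inter.1 h2).2
    have hsd6 : G.neighborFinset z \ G.neighborFinset x = {xi} := by
      apply finsingle
      · have h1 := Finset.card_sdiff_add_card_inter (G.neighborFinset z) (G.neighborFinset x)
        have h2 : (G.neighborFinset z ∩ G.neighborFinset x).card = b := by
          rw [Finset.inter_comm]; exact hczx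
        rw [h2, hka z, hk] at h1
        omega
      · rw [mem_sdiff]; exact ⟨(mem_neighborFinset _ _ _).2 hzxi, hxinx⟩
    have hNz : G.neighborFinset z = (M ∪ {y}) ∪ {xi} := by
      conv_lhs => rw [hsplit (G.neighborFinset z) (G.neighborFinset x)]
      rw [Finset.inter_comm, heq4, hsd6]
    have hy2ny : y ∉ G.neighborFinset y2 := by
      intro h
      have h2 : y2 ∈ G.neighborFinset y := hsymm y2 y h
      rw [hNy] at h2
      rcases Finset.mem_union.1 h2 with h3 | h3
      · rcases Finset.mem_union.1 h3 with h4 | h4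
        · exact hy2nM h4
        · rw [Finset.mem_singleton] at h4
          exact hznx (h4 ▸ hy2x)
      · rw [Finset.mem_singleton] at h3
        exact G.irrefl ((mem_neighborFinset _ _ _).1 (h3 ▸ hy2x))
    have hMy2 : G.neighborFinset y2 ∩ G.neighborFinset x = M := by
      apply Finset.eq_of_subset_of_card_le
      · intro u hu
        obtain ⟨huy2, hux⟩ := Finset.mem_inter.1 hu
        have hux' := hux
        rw [hNx5] at hux'
        rcases Finset.mem_union.1 hux' with h3 | h3
        · rcases Finset.mem_union.1 h3 with h4 | h4
          · exact h4
          · rw [Finset.mem_singleton] at h4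
            exact absurd (h4 ▸ huy2) hy2ny
        · rw [Finset.mem_singleton] at h3
          subst h3
          exact absurd huy2 (by rw [mem_neighborFinset]; exact G.irrefl)
      · have h5 : (G.neighborFinset y2 ∩ G.neighborFinset x).card = a := hNa y2 hy2x
        rw [h5, hMcard]
    have hMsuby2 : M ⊆ G.neighborFinset y2 := by
      rw [← hMy2]; exact Finset.inter_subset_left
    have hzny2 : z ∉ G.neighborFinset y2 := fun h => hy2nz (hsymm y2 z h)
    have hxny2 : x ∈ G.neighborFinset y2 := hsymm x y2 hy2x
    have hinter8 : G.neighborFinset y2 ∩ G.neighborFinset y = M ∪ {x} := by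
      rw [hNy, Finset.inter_union_distrib_left, Finset.inter_union_distrib_left,
        Finset.inter_eq_right.2 hMsuby2, Finset.inter_singleton_of_notMem hzny2,
        Finset.inter_singleton_of_mem hxny2, Finset.union_empty]
    have hxnM : x ∉ M := fun h => G.irrefl ((mem_neighborFinset _ _ _).1 (Finset.mem_inter.1 h).1)
    have hc8 : (G.neighborFinset y2 ∩ G.neighborFinset y).card = b := by
      rw [hinter8, Finset.card_union_of_disjoint (by
        rw [Finset.disjoint_right]
        intro u hu hu2
        rw [Finset.mem_singleton] at hu
        exact hxnM (hu ▸ hu2)), hMcard, Finset.card_singleton, hba]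
    have hxiny2 : xi ∈ G.neighborFinset y2 :=
      hsymm xi y2 ((hmemxi y2).2 (Or.inl ⟨hy2x, hy2ney⟩))
    have hxiny : xi ∉ G.neighborFinset y := fun h => hyxiAdj ((mem_neighborFinset _ _ _).1 h)
    have hsd9 : G.neighborFinset y2 \ G.neighborFinset y = {xi} := by
      apply finsingle
      · have h1 := Finset.card_sdiff_add_card_inter (G.neighborFinset y2) (G.neighborFinset y)
        rw [hc8, hka y2, hk] at h1
        omega
      · rw [mem_sdiff]; exact ⟨hxiny2, hxiny⟩
    have hNy2 : G.neighborFinset y2 = (M ∪ {x}) ∪ {xi} := by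
      conv_lhs => rw [hsplit (G.neighborFinset y2) (G.neighborFinset y)]
      rw [hinter8, hsd9]
    rcases Finset.eq_empty_or_nonempty M with hM0 | ⟨w, hwM⟩
    · -- the C5 case: contradiction with non-strong-regularity
      have hx5 : G.neighborFinset x = {y, y2} := by
        rw [hNx5, hM0]
        ext u; simp
      have hy5 : G.neighborFinset y = {z, x} := by
        rw [hNy, hM0]
        ext u; simp
      have hz5 : G.neighborFinset z = {y, xi} := by
        rw [hNz, hM0]
        ext u; simp
      have hy25 : G.neighborFinset y2 = {x, xi} := by
        rw [hNy2, hM0]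
        ext u; simp
      have hxi5 : G.neighborFinset xi = {y2, z} := by
        rw [hNxi, hx5]
        ext u
        simp only [Finset.mem_union, Finset.mem_sdiff, Finset.mem_insert, Finset.mem_singleton]
        constructor
        · rintro (⟨hy_ | hy_, hne⟩ | rfl)
          · exact absurd hy_ hne
          · exact Or.inl hy_
          · exact Or.inr rfl
        · rintro (rfl | rfl)
          · exact Or.inl ⟨Or.inr rfl, hy2ney⟩
          · exact Or.inr rfl
      have nxy : x ≠ y := hyne.symm
      have nxz : x ≠ z := hxnez
      have nxxi : x ≠ xi := fun h => hxinex h.symm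
      have nxy2 : x ≠ y2 := fun h => G.irrefl ((mem_neighborFinset _ _ _).1 (h ▸ hy2x))
      have nyz : y ≠ z := hyzadj.ne
      have nyxi : y ≠ xi := hynexi
      have nyy2 : y ≠ y2 := fun h => hy2ney h.symm
      have ny2z : y2 ≠ z := fun h => hznx (h ▸ hy2x)
      have ny2xi : y2 ≠ xi := fun h => hxinx (h ▸ hy2x)
      have nzxi : z ≠ xi := hzxi.ne
      exact hnsrg (c5case G hcard hreg hconn x y y2 z xi hx5 hy5 hy25 hz5 hxi5
        nxy nxy2 nxz nxxi nyy2 nyz nyxi ny2z ny2xi nzxi)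
    · -- the degree contradiction
      obtain ⟨hwx, hwy⟩ := Finset.mem_inter.1 hwM
      have hwney : w ≠ y := fun h => hyny (h ▸ hwy)
      have hxinw : xi ∈ G.neighborFinset w :=
        hsymm xi w ((hmemxi w).2 (Or.inl ⟨hwx, hwney⟩))
      have hzinw : z ∈ G.neighborFinset w := hMz w hwM
      have hxinw' : x ∈ G.neighborFinset w := hsymm x w hwx
      have hsubw : (G.neighborFinset w ∩ G.neighborFinset x) ∪ {x, z, xi} ⊆
          G.neighborFinset w := by
        intro u hu
        rcases Finset.mem_union.1 hu with h | h
        · exact (Finset.mem_inter.1 h).1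
        · simp only [Finset.mem_insert, Finset.mem_singleton] at h
          rcases h with rfl | rfl | rfl
          · exact hxinw'
          · exact hzinw
          · exact hxinw
      have hdisjw : Disjoint (G.neighborFinset w ∩ G.neighborFinset x)
          ({x, z, xi} : Finset V) := by
        rw [Finset.disjoint_right]
        intro u hu hu2
        simp only [Finset.mem_insert, Finset.mem_singleton] at hu
        have hux := (Finset.mem_inter.1 hu2).2
        rcases hu with rfl | rfl | rfl
        · exact G.irrefl ((mem_neighborFinset _ _ _).1 hux)
        · exact hznx hux
        · exact hxinx hux
      have hc3 : ({x, z, xi} : Finset V).card = 3 := by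
        rw [Finset.card_insert_of_notMem (by
          simp only [Finset.mem_insert, Finset.mem_singleton]
          push_neg
          exact ⟨hxnez, fun h => hxinex h.symm⟩),
          Finset.card_insert_of_notMem (by
          simp only [Finset.mem_singleton]
          exact hzxi.ne), Finset.card_singleton]
      have hle := Finset.card_le_card hsubw
      have hNaw : (G.neighborFinset w ∩ G.neighborFinset x).card = a := hNa w hwx
      rw [Finset.card_union_of_disjoint hdisjw, hc3, hka w, hk, hNaw] at hle
      omega
  -- Part 1
  have part1 : G.neighborFinset x ∩ G.neighborFinset y =
      G.neighborFinset x ∩ G.neighborFinset z := by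
    ext u
    simp only [Finset.mem_inter]
    constructor
    · rintro ⟨hux, huy⟩
      refine ⟨hux, ?_⟩
      have huney : u ≠ y := fun h => hyny (h ▸ huy)
      exact hsymm u z ((L2 u hux huney).2 (hsymm y u huy))
    · rintro ⟨hux, huz⟩
      refine ⟨hux, ?_⟩
      have huney : u ≠ y := by
        rintro rfl
        exact hyz ((mem_neighborFinset _ _ _).1 huz).symm
      exact hsymm u y ((L2 u hux huney).1 (hsymm z u huz))
  refine ⟨part1, ?_⟩
  -- Part 2
  intro w hw u hu
  obtain ⟨hwx, hwy⟩ := Finset.mem_inter.1 hw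
  rw [dezaBc, Finset.mem_insert] at hu
  rcases hu with rfl | hu
  · exact hw
  rw [dezaB, Finset.mem_filter] at hu
  obtain ⟨-, hunw, hcuw⟩ := hu
  have hwney : w ≠ y := fun h => hyny (h ▸ hwy)
  have hxinfw : x ∈ G.neighborFinset w := hsymm x w hwx
  have hyinfw : y ∈ G.neighborFinset w := hsymm y w hwy
  have hzinfw : z ∈ G.neighborFinset w := (L2 w hwx hwney).2 hyinfw
  have hcwu : (G.neighborFinset w ∩ G.neighborFinset u).card = b := by
    rw [← cnDef G w u, cnComm]
    exact hcuw
  by_cases hadj : u ∈ G.neighborFinset w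
  · have hunu : u ∉ G.neighborFinset u := by rw [mem_neighborFinset]; exact G.irrefl
    have hsdu : G.neighborFinset w \ G.neighborFinset u = {u} := by
      apply finsingle
      · have h1 := Finset.card_sdiff_add_card_inter (G.neighborFinset w) (G.neighborFinset u)
        rw [hcwu, hka w, hk] at h1
        omega
      · rw [mem_sdiff]; exact ⟨hadj, hunu⟩
    have hmemu : ∀ t ∈ G.neighborFinset w, t ≠ u → t ∈ G.neighborFinset u := by
      intro t ht htne
      by_contra h
      have h2 : t ∈ G.neighborFinset w \ G.neighborFinset u := Finset.mem_sdiff.2 ⟨ht, h⟩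
      rw [hsdu, Finset.mem_singleton] at h2
      exact htne h2
    have hunex : u ≠ x := by
      rintro rfl
      have h1 := hNa w hwx
      rw [cnComm] at hcuw
      exact hanb (((h1 : commonNbrs G w u = a).symm).trans hcuw)
    have huney : u ≠ y := by
      rintro rfl
      have hz_u := hmemu z hzinfw (fun h => hznx (by rw [h]; exact hyN))
      exact hyz ((mem_neighborFinset _ _ _).1 hz_u)
    exact Finset.mem_inter.2 ⟨hsymm u x (hmemu x hxinfw (fun h => hunex h.symm)),
      hsymm u y (hmemu y hyinfw (fun h => huney h.symm))⟩
  · have hcard1 : (G.neighborFinset w \ G.neighborFinset u).card = 1 := by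
      have h1 := Finset.card_sdiff_add_card_inter (G.neighborFinset w) (G.neighborFinset u)
      rw [hcwu, hka w, hk] at h1
      omega
    by_cases hxu : x ∈ G.neighborFinset u
    · by_cases hyu : y ∈ G.neighborFinset u
      · exact Finset.mem_inter.2 ⟨hsymm u x hxu, hsymm u y hyu⟩
      · exfalso
        have hsdy' : G.neighborFinset w \ G.neighborFinset u = {y} :=
          finsingle hcard1 (Finset.mem_sdiff.2 ⟨hyinfw, hyu⟩)
        have hz_u : z ∈ G.neighborFinset u := by
          by_contra h
          have h2 : z ∈ G.neighborFinset w \ G.neighborFinset u :=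
            Finset.mem_sdiff.2 ⟨hzinfw, h⟩
          rw [hsdy', Finset.mem_singleton] at h2
          exact hznx (by rw [h2]; exact hyN)
        have hu_in : u ∈ G.neighborFinset x ∩ G.neighborFinset z :=
          Finset.mem_inter.2 ⟨hsymm u x hxu, hsymm u z hz_u⟩
        rw [← part1] at hu_in
        exact hyu (hsymm y u (Finset.mem_inter.1 hu_in).2)
    · exfalso
      have hsdx' : G.neighborFinset w \ G.neighborFinset u = {x} :=
        finsingle hcard1 (Finset.mem_sdiff.2 ⟨hxinfw, hxu⟩)
      have hxinw : xi ∈ G.neighborFinset w :=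
        hsymm xi w ((hmemxi w).2 (Or.inl ⟨hwx, hwney⟩))
      have hxi_u : xi ∈ G.neighborFinset u := by
        by_contra h
        have h2 : xi ∈ G.neighborFinset w \ G.neighborFinset u :=
          Finset.mem_sdiff.2 ⟨hxinw, h⟩
        rw [hsdx', Finset.mem_singleton] at h2
        exact hxinex h2
      have hz_u : z ∈ G.neighborFinset u := by
        by_contra h
        have h2 : z ∈ G.neighborFinset w \ G.neighborFinset u :=
          Finset.mem_sdiff.2 ⟨hzinfw, h⟩
        rw [hsdx', Finset.mem_singleton] at h2
        exact hxnez h2.symm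
      have h3 : u ∈ G.neighborFinset xi \ G.neighborFinset x :=
        Finset.mem_sdiff.2 ⟨hsymm u xi hxi_u, fun h => hxu (hsymm x u h)⟩
      rw [hsd2, Finset.mem_singleton] at h3
      rw [h3] at hz_u
      exact G.irrefl ((mem_neighborFinset _ _ _).1 hz_u)
end

section
/- Let Γ be a strictly Deza graph with parameters (n, k, b, a) with k = b + 1 and β(v) > 1 for every vertex v, and let x be a vertex of type (A) with β = β(x). Then one of the following two statements holds: (1) there is a unique vertex y ∈ N(x) such that N(x) \ N(xᵢ) = {y} for every xᵢ ∈ B(x), and the union over xᵢ ∈ B(x) of the sets N(xᵢ) \ N(x) has exactly β elements; (2) there is a unique vertex z ∉ N(x) ∪ {x} such that N(xᵢ) \ N(x) = {z} for every xᵢ ∈ B(x), and the union over xᵢ ∈ B(x) of the sets N(x) \ N(xᵢ) has exactly β elements. -/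
open Finset SimpleGraph

universe u v

section auxl
variable {α : Type*} [DecidableEq α]

lemma mem_left_of_sdiff_singleton {s t : Finset α} {y : α} (hy : s \ t = {y}) :
    y ∈ s ∧ y ∉ t := by
  have : y ∈ s \ t := by rw [hy]; exact mem_singleton_self y
  exact mem_sdiff.1 this

lemma char_mem {s t : Finset α} {y z : α} (hy : s \ t = {y}) (hz : t \ s = {z}) {w : α} :
    w ∈ t ↔ (w ∈ s ∧ w ≠ y) ∨ w = z := by
  obtain ⟨hys, hyt⟩ := mem_left_of_sdiff_singleton hy
  obtain ⟨hzt, hzs⟩ := mem_left_of_sdiff_singleton hz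
  constructor
  · intro hw
    by_cases hws : w ∈ s
    · exact Or.inl ⟨hws, fun h => hyt (h ▸ hw)⟩
    · refine Or.inr ?_
      have : w ∈ t \ s := mem_sdiff.2 ⟨hw, hws⟩
      rw [hz] at this; exact mem_singleton.1 this
  · rintro (⟨hws, hwy⟩ | rfl)
    · by_contra hwt
      have : w ∈ s \ t := mem_sdiff.2 ⟨hws, hwt⟩
      rw [hy] at this; exact hwy (mem_singleton.1 this)
    · exact hzt

lemma eq_of_char {s t1 t2 : Finset α} {y z : α} (h1y : s \ t1 = {y}) (h1z : t1 \ s = {z})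
    (h2y : s \ t2 = {y}) (h2z : t2 \ s = {z}) : t1 = t2 := by
  ext w; rw [char_mem h1y h1z, char_mem h2y h2z]

lemma inter_M {s t1 t2 : Finset α} {y1 z1 y2 z2 : α}
    (h1y : s \ t1 = {y1}) (h1z : t1 \ s = {z1}) (h2y : s \ t2 = {y2}) (h2z : t2 \ s = {z2})
    (hzz : z1 ≠ z2) : t1 ∩ t2 = s \ {y1, y2} := by
  have hz1 := (mem_left_of_sdiff_singleton h1z).2
  have hz2 := (mem_left_of_sdiff_singleton h2z).2
  ext w
  simp only [mem_inter, char_mem h1y h1z, char_mem h2y h2z, mem_sdiff, mem_insert,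
    mem_singleton, not_or]
  constructor
  · rintro ⟨⟨hws, hw1⟩ | rfl, hR⟩
    · rcases hR with ⟨_, hw2⟩ | rfl
      · exact ⟨hws, hw1, hw2⟩
      · exact absurd hws hz2
    · rcases hR with ⟨hws2, _⟩ | h2
      · exact absurd hws2 hz1
      · exact absurd h2 hzz
  · rintro ⟨hws, hw1, hw2⟩
    exact ⟨Or.inl ⟨hws, hw1⟩, Or.inl ⟨hws, hw2⟩⟩

lemma pair_inter_empty_s10 {a b c d : α} (h1 : a ≠ c) (h2 : a ≠ d) (h3 : b ≠ c) (h4 : b ≠ d) :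
    ({a, b} : Finset α) ∩ {c, d} = ∅ := by
  ext w
  simp only [mem_inter, mem_insert, mem_singleton, notMem_empty, iff_false, not_and, not_or]
  rintro (rfl | rfl) <;> exact ⟨by tauto, by tauto⟩

lemma inter_11 {a b d : α} (h1 : b ≠ a) (h2 : b ≠ d) :
    ({a, b} : Finset α) ∩ {a, d} = {a} := by
  ext w
  simp only [mem_inter, mem_insert, mem_singleton]
  constructor
  · rintro ⟨rfl | rfl, h | h⟩ <;> tauto
  · rintro rfl; exact ⟨Or.inl rfl, Or.inl rfl⟩

end auxl

lemma bridge {V : Type*} [Fintype V] [DecidableEq V] (G : SimpleGraph V)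
    [DecidableRel G.Adj] (v w : V) :
    Fintype.card (G.commonNeighbors v w) =
      (G.neighborFinset v ∩ G.neighborFinset w).card := by
  rw [← Set.toFinset_card]
  congr 1
  ext u
  simp [SimpleGraph.mem_commonNeighbors]

lemma exists_mid {V : Type*} (G : SimpleGraph V) {x w : V} (hconn : G.Connected)
    (hd : G.dist x w ≤ 2) (hne : w ≠ x) (hadj : ¬ G.Adj x w) :
    ∃ u, G.Adj x u ∧ G.Adj u w := by
  obtain ⟨p, hp⟩ := hconn.exists_walk_length_eq_dist x w
  have hd2 : p.length ≤ 2 := by rw [hp]; exact hd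
  cases p with
  | nil => exact absurd rfl hne.symm
  | cons h q =>
    cases q with
    | nil => exact absurd h hadj
    | @cons _ c _ h2 q2 =>
      have hq2 : q2.length = 0 := by
        simp only [SimpleGraph.Walk.length_cons] at hd2
        omega
      have hcw := SimpleGraph.Walk.eq_of_length_eq_zero hq2
      subst hcw
      exact ⟨_, h, h2⟩


theorem stmt10 {V : Type u} [Fintype V] [DecidableEq V] (G : SimpleGraph V)
    [DecidableRel G.Adj] (n k b a : ℕ)
    (hG : IsStrictlyDezaGraph G n k b a) (hk : k = b + 1)
    (hβ : ∀ v : V, 1 < (dezaB G b v).card) :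
    ∀ x : V, IsTypeA G b x →
      ((∃! y : V, y ∈ G.neighborFinset x ∧
          ∀ xi ∈ dezaB G b x, G.neighborFinset x \ G.neighborFinset xi = {y}) ∧
        ((dezaB G b x).biUnion fun xi =>
            G.neighborFinset xi \ G.neighborFinset x).card = (dezaB G b x).card) ∨
      ((∃! z : V, z ∉ insert x (G.neighborFinset x) ∧
          ∀ xi ∈ dezaB G b x, G.neighborFinset xi \ G.neighborFinset x = {z}) ∧
        ((dezaB G b x).biUnion fun xi =>
            G.neighborFinset x \ G.neighborFinset xi).card = (dezaB G b x).card) := by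
  obtain ⟨⟨hbot, hcard, hreg, hab, halt⟩, hconn, hdist, _hex, hnsrg⟩ := hG
  have hcardN : ∀ v : V, (G.neighborFinset v).card = k := fun v => hreg v
  have hba : a < b := by
    rcases Nat.lt_or_ge a b with h | h
    · exact h
    · exfalso
      have hab' : a = b := le_antisymm hab h
      refine hnsrg ⟨b, b, hcard, hreg, ?_, ?_⟩
      · intro v w hadj
        rw [bridge]
        rcases halt v w (G.ne_of_adj hadj) with h' | h'
        · exact h'
        · rw [← hab']; exact h'
      · intro v w hvw hnadj
        rw [bridge]
        rcases halt v w hvw with h' | h'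
        · exact h'
        · rw [← hab']; exact h'
  intro x hA
  have hAe : dezaB G b x ∩ G.neighborFinset x = ∅ := hA
  have hBmem : ∀ xi ∈ dezaB G b x, xi ≠ x ∧ commonNbrs G xi x = b := by
    intro xi hxi
    simpa [dezaB] using hxi
  have hBnotadj : ∀ xi ∈ dezaB G b x, ¬ G.Adj x xi := by
    intro xi hxi hadj
    have : xi ∈ dezaB G b x ∩ G.neighborFinset x :=
      mem_inter.2 ⟨hxi, (G.mem_neighborFinset x xi).2 hadj⟩
    rw [hAe] at this
    exact notMem_empty _ this
  have hBnots : ∀ xi ∈ dezaB G b x, xi ∉ G.neighborFinset x := by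
    intro xi hxi h
    exact hBnotadj xi hxi ((G.mem_neighborFinset x xi).1 h)
  have hxnotN : ∀ xi ∈ dezaB G b x, x ∉ G.neighborFinset xi := by
    intro xi hxi h
    exact hBnotadj xi hxi ((G.mem_neighborFinset xi x).1 h).symm
  have hxns : x ∉ G.neighborFinset x := fun h => G.loopless.irrefl x ((G.mem_neighborFinset _ _).1 h)
  have hex2 : ∀ xi ∈ dezaB G b x, ∃ yz : V × V,
      G.neighborFinset x \ G.neighborFinset xi = {yz.1} ∧
      G.neighborFinset xi \ G.neighborFinset x = {yz.2} := by
    intro xi hxi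
    obtain ⟨hnex, hcom⟩ := hBmem xi hxi
    have hint2 : (G.neighborFinset xi ∩ G.neighborFinset x).card = b := hcom
    have hint : (G.neighborFinset x ∩ G.neighborFinset xi).card = b := by
      rw [Finset.inter_comm]; exact hint2
    have c1 : (G.neighborFinset x \ G.neighborFinset xi).card = 1 := by
      have := Finset.card_inter_add_card_sdiff (G.neighborFinset x) (G.neighborFinset xi)
      rw [hint, hcardN] at this
      omega
    have c2 : (G.neighborFinset xi \ G.neighborFinset x).card = 1 := by
      have := Finset.card_inter_add_card_sdiff (G.neighborFinset xi) (G.neighborFinset x)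
      rw [hint2, hcardN] at this
      omega
    obtain ⟨y, hy⟩ := Finset.card_eq_one.1 c1
    obtain ⟨z, hz⟩ := Finset.card_eq_one.1 c2
    exact ⟨(y, z), hy, hz⟩
  choose f hfy hfz using hex2
  have hzne' : ∀ xi (h : xi ∈ dezaB G b x),
      (f xi h).2 ≠ x ∧ (f xi h).2 ∉ G.neighborFinset x := by
    intro xi h
    have h2 := mem_left_of_sdiff_singleton (hfz xi h)
    exact ⟨fun he => hxnotN xi h (he ▸ h2.1), h2.2⟩
  have hP1 : ∀ xi (h1 : xi ∈ dezaB G b x) xj (h2 : xj ∈ dezaB G b x),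
      (f xi h1).1 = (f xj h2).1 → (f xi h1).2 = (f xj h2).2 → xi = xj := by
    intro xi h1 xj h2 hy12 hz12
    by_contra hne2
    have h2y' : G.neighborFinset x \ G.neighborFinset xj = {(f xi h1).1} := by
      rw [hfy xj h2, hy12]
    have h2z' : G.neighborFinset xj \ G.neighborFinset x = {(f xi h1).2} := by
      rw [hfz xj h2, hz12]
    have ht := eq_of_char (hfy xi h1) (hfz xi h1) h2y' h2z'
    have hcom : commonNbrs G xi xj = k := by
      rw [commonNbrs, ht, Finset.inter_self, hcardN]
    rcases halt xi xj hne2 with h | h <;> omega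
  have hnoM : ∀ xi (h1 : xi ∈ dezaB G b x) xj (h2 : xj ∈ dezaB G b x),
      (f xi h1).1 = (f xj h2).1 ∨ (f xi h1).2 = (f xj h2).2 := by
    intro xi h1 xj h2
    by_contra hcon
    push_neg at hcon
    obtain ⟨hyy, hzz⟩ := hcon
    have hxne : xi ≠ xj := by
      rintro rfl
      exact hyy rfl
    have hy1s := (mem_left_of_sdiff_singleton (hfy xi h1)).1
    have hy2s := (mem_left_of_sdiff_singleton (hfy xj h2)).1
    have hsub12 : ({(f xi h1).1, (f xj h2).1} : Finset V) ⊆ G.neighborFinset x := by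
      intro w hw
      rcases mem_insert.1 hw with rfl | hw
      · exact hy1s
      · rw [mem_singleton.1 hw]; exact hy2s
    have hcom2 : commonNbrs G xi xj = k - 2 := by
      rw [commonNbrs, inter_M (hfy xi h1) (hfz xi h1) (hfy xj h2) (hfz xj h2) hzz,
        card_sdiff_of_subset hsub12, Finset.card_pair hyy, hcardN]
    have hka : a = k - 2 := by
      rcases halt xi xj hxne with h | h <;> omega
    have hnb : ∀ u ∈ G.neighborFinset x, commonNbrs G u x = a := by
      intro u hu
      have hux : u ≠ x := by
        rintro rfl
        exact hxns hu
      rcases halt u x hux with h | h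
      · exfalso
        have hmem : u ∈ dezaB G b x := by
          simp only [dezaB, Finset.mem_filter, Finset.mem_univ, true_and]
          exact ⟨hux, h⟩
        exact hBnots u hmem hu
      · exact h
    have hxnex_i : xi ≠ x := (hBmem xi h1).1
    have hxnex_j : xj ≠ x := (hBmem xj h2).1
    rcases Nat.lt_or_ge k 3 with hk3 | hk3
    · -- k = 2 : the C5 case
      have hk2 : k = 2 := by omega
      have ha0 : a = 0 := by omega
      have hNx : G.neighborFinset x = {(f xi h1).1, (f xj h2).1} := by
        refine (Finset.eq_of_subset_of_card_le hsub12 ?_).symm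
        rw [hcardN, Finset.card_pair hyy, hk2]
      have hxy1 : G.Adj x (f xi h1).1 := (G.mem_neighborFinset _ _).1 hy1s
      have hxy2 : G.Adj x (f xj h2).1 := (G.mem_neighborFinset _ _).1 hy2s
      have hy2mem : (f xj h2).1 ∈ G.neighborFinset xi :=
        (char_mem (hfy xi h1) (hfz xi h1)).2 (Or.inl ⟨hy2s, hyy.symm⟩)
      have hy1memj : (f xi h1).1 ∈ G.neighborFinset xj :=
        (char_mem (hfy xj h2) (hfz xj h2)).2 (Or.inl ⟨hy1s, hyy⟩)
      have hxiy2 : G.Adj xi (f xj h2).1 := (G.mem_neighborFinset _ _).1 hy2mem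
      have hxjy1 : G.Adj xj (f xi h1).1 := (G.mem_neighborFinset _ _).1 hy1memj
      -- distinctness
      have d_xy1 : x ≠ (f xi h1).1 := G.ne_of_adj hxy1
      have d_xy2 : x ≠ (f xj h2).1 := G.ne_of_adj hxy2
      have d_y1xi : (f xi h1).1 ≠ xi := fun h => hBnots xi h1 (h ▸ hy1s)
      have d_y1xj : (f xi h1).1 ≠ xj := fun h => hBnots xj h2 (h ▸ hy1s)
      have d_y2xi : (f xj h2).1 ≠ xi := fun h => hBnots xi h1 (h ▸ hy2s)
      have d_y2xj : (f xj h2).1 ≠ xj := fun h => hBnots xj h2 (h ▸ hy2s)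
      have hNy2 : G.neighborFinset (f xj h2).1 = {x, xi} := by
        refine (Finset.eq_of_subset_of_card_le ?_ ?_).symm
        · intro w hw
          rcases mem_insert.1 hw with rfl | hw
          · exact (G.mem_neighborFinset _ _).2 hxy2.symm
          · rw [mem_singleton.1 hw]
            exact (G.mem_neighborFinset _ _).2 hxiy2.symm
        · rw [hcardN, Finset.card_pair (fun h => hxnex_i h.symm), hk2]
      have hNy1 : G.neighborFinset (f xi h1).1 = {x, xj} := by
        refine (Finset.eq_of_subset_of_card_le ?_ ?_).symm
        · intro w hw
          rcases mem_insert.1 hw with rfl | hw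
          · exact (G.mem_neighborFinset _ _).2 hxy1.symm
          · rw [mem_singleton.1 hw]
            exact (G.mem_neighborFinset _ _).2 hxjy1.symm
        · rw [hcardN, Finset.card_pair (fun h => hxnex_j h.symm), hk2]
      have hfive : ∀ w : V, w = x ∨ w = (f xi h1).1 ∨ w = (f xj h2).1 ∨ w = xi ∨ w = xj := by
        intro w
        by_cases h0 : w = x
        · exact Or.inl h0
        by_cases hadj : G.Adj x w
        · have hw : w ∈ G.neighborFinset x := (G.mem_neighborFinset _ _).2 hadj
          rw [hNx] at hw
          rcases mem_insert.1 hw with rfl | hw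
          · exact Or.inr (Or.inl rfl)
          · exact Or.inr (Or.inr (Or.inl (mem_singleton.1 hw)))
        · obtain ⟨u, hxu, huw⟩ := exists_mid G hconn (hdist x w) h0 hadj
          have hu : u ∈ G.neighborFinset x := (G.mem_neighborFinset _ _).2 hxu
          rw [hNx] at hu
          rcases mem_insert.1 hu with rfl | hu
          · have hw : w ∈ G.neighborFinset (f xi h1).1 := (G.mem_neighborFinset _ _).2 huw
            rw [hNy1] at hw
            rcases mem_insert.1 hw with rfl | hw
            · exact absurd rfl h0
            · exact Or.inr (Or.inr (Or.inr (Or.inr (mem_singleton.1 hw))))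
          · have hu2 := mem_singleton.1 hu
            subst hu2
            have hw : w ∈ G.neighborFinset (f xj h2).1 := (G.mem_neighborFinset _ _).2 huw
            rw [hNy2] at hw
            rcases mem_insert.1 hw with rfl | hw
            · exact absurd rfl h0
            · exact Or.inr (Or.inr (Or.inr (Or.inl (mem_singleton.1 hw))))
      have hz1i : (f xi h1).2 ∈ G.neighborFinset xi :=
        (mem_left_of_sdiff_singleton (hfz xi h1)).1
      have hz1ns : (f xi h1).2 ∉ G.neighborFinset x :=
        (mem_left_of_sdiff_singleton (hfz xi h1)).2
      have hz1xj : (f xi h1).2 = xj := by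
        rcases hfive (f xi h1).2 with h | h | h | h | h
        · exact absurd h (hzne' xi h1).1
        · exfalso; apply hz1ns; rw [hNx, h]; exact mem_insert_self _ _
        · exfalso; apply hz1ns; rw [hNx, h]; exact mem_insert_of_mem (mem_singleton_self _)
        · exfalso; rw [h] at hz1i
          exact G.loopless.irrefl xi ((G.mem_neighborFinset _ _).1 hz1i)
        · exact h
      have hxiNj : xi ∈ G.neighborFinset xj := by
        have hji : xj ∈ G.neighborFinset xi := hz1xj ▸ hz1i
        exact (G.mem_neighborFinset _ _).2 ((G.mem_neighborFinset _ _).1 hji).symm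
      have hadjij : G.Adj xi xj := ((G.mem_neighborFinset _ _).1 hxiNj).symm
      have hNxi : G.neighborFinset xi = {(f xj h2).1, xj} := by
        refine (Finset.eq_of_subset_of_card_le ?_ ?_).symm
        · intro w hw
          rcases mem_insert.1 hw with rfl | hw
          · exact hy2mem
          · rw [mem_singleton.1 hw, ← hz1xj]; exact hz1i
        · rw [hcardN, Finset.card_pair d_y2xj, hk2]
      have hNxj : G.neighborFinset xj = {(f xi h1).1, xi} := by
        refine (Finset.eq_of_subset_of_card_le ?_ ?_).symm
        · intro w hw
          rcases mem_insert.1 hw with rfl | hw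
          · exact hy1memj
          · rw [mem_singleton.1 hw]; exact hxiNj
        · rw [hcardN, Finset.card_pair d_y1xi, hk2]
      -- non-adjacency
      have nadj_xxi : ¬ G.Adj x xi := hBnotadj xi h1
      have nadj_xxj : ¬ G.Adj x xj := hBnotadj xj h2
      have nadj_y1y2 : ¬ G.Adj (f xi h1).1 (f xj h2).1 := by
        intro h
        have := (G.mem_neighborFinset _ _).2 h
        rw [hNy1] at this
        rcases mem_insert.1 this with h' | h'
        · exact d_xy2 h'.symm
        · exact d_y2xj (mem_singleton.1 h')
      have nadj_y1xi : ¬ G.Adj (f xi h1).1 xi := by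
        intro h
        have := (G.mem_neighborFinset _ _).2 h
        rw [hNy1] at this
        rcases mem_insert.1 this with h' | h'
        · exact hxnex_i h'
        · exact hxne (mem_singleton.1 h')
      have nadj_y2xj : ¬ G.Adj (f xj h2).1 xj := by
        intro h
        have := (G.mem_neighborFinset _ _).2 h
        rw [hNy2] at this
        rcases mem_insert.1 this with h' | h'
        · exact hxnex_j h'
        · exact hxne (mem_singleton.1 h').symm
      -- intersections
      have hI1 : G.neighborFinset x ∩ G.neighborFinset (f xi h1).1 = ∅ := by
        rw [hNx, hNy1]
        exact pair_inter_empty_s10 d_xy1.symm d_y1xj d_xy2.symm d_y2xj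
      have hI2 : G.neighborFinset x ∩ G.neighborFinset (f xj h2).1 = ∅ := by
        rw [hNx, hNy2]
        exact pair_inter_empty_s10 d_xy1.symm d_y1xi d_xy2.symm d_y2xi
      have hI3 : G.neighborFinset (f xi h1).1 ∩ G.neighborFinset xj = ∅ := by
        rw [hNy1, hNxj]
        exact pair_inter_empty_s10 d_xy1 (fun h => hxnex_i h.symm) d_y1xj.symm hxne.symm
      have hI4 : G.neighborFinset (f xj h2).1 ∩ G.neighborFinset xi = ∅ := by
        rw [hNy2, hNxi]
        exact pair_inter_empty_s10 d_xy2 (fun h => hxnex_j h.symm) d_y2xi.symm hxne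
      have hI5 : G.neighborFinset xi ∩ G.neighborFinset xj = ∅ := by
        rw [hNxi, hNxj]
        exact pair_inter_empty_s10 hyy.symm d_y2xi d_y1xj.symm hxne.symm
      have hJ1 : G.neighborFinset x ∩ G.neighborFinset xi = {(f xj h2).1} := by
        rw [hNx, hNxi, Finset.pair_comm (f xi h1).1 (f xj h2).1]
        exact inter_11 hyy d_y1xj
      have hJ2 : G.neighborFinset x ∩ G.neighborFinset xj = {(f xi h1).1} := by
        rw [hNx, hNxj]
        exact inter_11 hyy.symm d_y2xi
      have hJ3 : G.neighborFinset (f xi h1).1 ∩ G.neighborFinset (f xj h2).1 = {x} := by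
        rw [hNy1, hNy2]
        exact inter_11 hxnex_j hxne.symm
      have hJ4 : G.neighborFinset (f xi h1).1 ∩ G.neighborFinset xi = {xj} := by
        rw [hNy1, hNxi, Finset.pair_comm x xj, Finset.pair_comm (f xj h2).1 xj]
        exact inter_11 (fun h => hxnex_j h.symm) d_xy2
      have hJ5 : G.neighborFinset (f xj h2).1 ∩ G.neighborFinset xj = {xi} := by
        rw [hNy2, hNxj, Finset.pair_comm x xi, Finset.pair_comm (f xi h1).1 xi]
        exact inter_11 (fun h => hxnex_i h.symm) d_xy1
      refine hnsrg ⟨0, 1, hcard, hreg, ?_, ?_⟩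
      · intro v w hadj
        rw [bridge]
        rcases hfive v with rfl | rfl | rfl | rfl | rfl <;>
          rcases hfive w with rfl | rfl | rfl | rfl | rfl <;>
          first
            | exact absurd hadj (G.loopless.irrefl _)
            | exact absurd hadj nadj_xxi
            | exact absurd hadj nadj_xxj
            | exact absurd hadj nadj_y1y2
            | exact absurd hadj nadj_y1xi
            | exact absurd hadj nadj_y2xj
            | exact absurd hadj.symm nadj_xxi
            | exact absurd hadj.symm nadj_xxj
            | exact absurd hadj.symm nadj_y1y2
            | exact absurd hadj.symm nadj_y1xi
            | exact absurd hadj.symm nadj_y2xj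
            | (rw [hI1]; exact Finset.card_empty)
            | (rw [hI2]; exact Finset.card_empty)
            | (rw [hI3]; exact Finset.card_empty)
            | (rw [hI4]; exact Finset.card_empty)
            | (rw [hI5]; exact Finset.card_empty)
            | (rw [Finset.inter_comm, hI1]; exact Finset.card_empty)
            | (rw [Finset.inter_comm, hI2]; exact Finset.card_empty)
            | (rw [Finset.inter_comm, hI3]; exact Finset.card_empty)
            | (rw [Finset.inter_comm, hI4]; exact Finset.card_empty)
            | (rw [Finset.inter_comm, hI5]; exact Finset.card_empty)
      · intro v w hvw hnadj
        rw [bridge]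
        rcases hfive v with rfl | rfl | rfl | rfl | rfl <;>
          rcases hfive w with rfl | rfl | rfl | rfl | rfl <;>
          first
            | exact absurd rfl hvw
            | exact absurd hxy1 hnadj
            | exact absurd hxy2 hnadj
            | exact absurd hxjy1 hnadj
            | exact absurd hxiy2 hnadj
            | exact absurd hadjij hnadj
            | exact absurd hxy1.symm hnadj
            | exact absurd hxy2.symm hnadj
            | exact absurd hxjy1.symm hnadj
            | exact absurd hxiy2.symm hnadj
            | exact absurd hadjij.symm hnadj
            | (rw [hJ1]; exact Finset.card_singleton _)
            | (rw [hJ2]; exact Finset.card_singleton _)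
            | (rw [hJ3]; exact Finset.card_singleton _)
            | (rw [hJ4]; exact Finset.card_singleton _)
            | (rw [hJ5]; exact Finset.card_singleton _)
            | (rw [Finset.inter_comm, hJ1]; exact Finset.card_singleton _)
            | (rw [Finset.inter_comm, hJ2]; exact Finset.card_singleton _)
            | (rw [Finset.inter_comm, hJ3]; exact Finset.card_singleton _)
            | (rw [Finset.inter_comm, hJ4]; exact Finset.card_singleton _)
            | (rw [Finset.inter_comm, hJ5]; exact Finset.card_singleton _)
    · -- k ≥ 3
      have hne12 : 0 < (G.neighborFinset x \ {(f xi h1).1, (f xj h2).1}).card := by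
        rw [card_sdiff_of_subset hsub12, Finset.card_pair hyy, hcardN]
        omega
      obtain ⟨u, hu⟩ := Finset.card_pos.1 hne12
      rw [mem_sdiff] at hu
      obtain ⟨hus, hunotp⟩ := hu
      have hu1 : u ≠ (f xi h1).1 := fun h => hunotp (by rw [h]; exact mem_insert_self _ _)
      have hu2 : u ≠ (f xj h2).1 :=
        fun h => hunotp (by rw [h]; exact mem_insert_of_mem (mem_singleton_self _))
      have hui : u ∈ G.neighborFinset xi :=
        (char_mem (hfy xi h1) (hfz xi h1)).2 (Or.inl ⟨hus, hu1⟩)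
      have huj : u ∈ G.neighborFinset xj :=
        (char_mem (hfy xj h2) (hfz xj h2)).2 (Or.inl ⟨hus, hu2⟩)
      have hxu : x ∈ G.neighborFinset u :=
        (G.mem_neighborFinset _ _).2 ((G.mem_neighborFinset _ _).1 hus).symm
      have hxiu : xi ∈ G.neighborFinset u :=
        (G.mem_neighborFinset _ _).2 ((G.mem_neighborFinset _ _).1 hui).symm
      have hxju : xj ∈ G.neighborFinset u :=
        (G.mem_neighborFinset _ _).2 ((G.mem_neighborFinset _ _).1 huj).symm
      have hsub : insert x (insert xi (insert xj
          (G.neighborFinset u ∩ G.neighborFinset x))) ⊆ G.neighborFinset u := by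
        intro w hw
        rcases mem_insert.1 hw with rfl | hw
        · exact hxu
        rcases mem_insert.1 hw with rfl | hw
        · exact hxiu
        rcases mem_insert.1 hw with rfl | hw
        · exact hxju
        · exact (mem_inter.1 hw).1
      have m3 : xj ∉ G.neighborFinset u ∩ G.neighborFinset x :=
        fun h => hBnots xj h2 (mem_inter.1 h).2
      have m2 : xi ∉ insert xj (G.neighborFinset u ∩ G.neighborFinset x) := by
        intro h
        rcases mem_insert.1 h with h' | h'
        · exact hxne h'
        · exact hBnots xi h1 (mem_inter.1 h').2
      have m1 : x ∉ insert xi (insert xj (G.neighborFinset u ∩ G.neighborFinset x)) := by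
        intro h
        rcases mem_insert.1 h with h' | h'
        · exact hxnex_i h'.symm
        rcases mem_insert.1 h' with h'' | h''
        · exact hxnex_j h''.symm
        · exact hxns (mem_inter.1 h'').2
      have hc := Finset.card_le_card hsub
      rw [Finset.card_insert_of_notMem m1, Finset.card_insert_of_notMem m2,
        Finset.card_insert_of_notMem m3, hcardN] at hc
      have hia : (G.neighborFinset u ∩ G.neighborFinset x).card = a := hnb u hus
      omega
  by_cases hyall : ∀ xi (h1 : xi ∈ dezaB G b x) (xj : V) (h2 : xj ∈ dezaB G b x),
      (f xi h1).1 = (f xj h2).1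
  · left
    obtain ⟨x1, hx1, x2, hx2, hx12⟩ := Finset.one_lt_card.1 (hβ x)
    constructor
    · refine ⟨(f x1 hx1).1, ⟨(mem_left_of_sdiff_singleton (hfy x1 hx1)).1, ?_⟩, ?_⟩
      · intro xk hxk
        rw [hfy xk hxk, hyall xk hxk x1 hx1]
      · rintro y' ⟨hy's, hy'all⟩
        have h1 := hy'all x1 hx1
        rw [hfy x1 hx1] at h1
        exact (Finset.singleton_injective h1).symm
    · have hdisj : ∀ xk ∈ dezaB G b x, ∀ xl ∈ dezaB G b x, xk ≠ xl →
          Disjoint (G.neighborFinset xk \ G.neighborFinset x)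
            (G.neighborFinset xl \ G.neighborFinset x) := by
        intro xk hk1 xl hl1 hkl
        rw [hfz xk hk1, hfz xl hl1, Finset.disjoint_singleton]
        intro hzeq
        exact hkl (hP1 xk hk1 xl hl1 (hyall xk hk1 xl hl1) hzeq)
      rw [Finset.card_biUnion hdisj]
      refine (Finset.sum_congr rfl ?_).trans (Finset.card_eq_sum_ones _).symm
      intro xk hxk
      rw [hfz xk hxk, Finset.card_singleton]
  · right
    push_neg at hyall
    obtain ⟨x1, hx1, x2, hx2, hyne⟩ := hyall
    have hz12 : (f x1 hx1).2 = (f x2 hx2).2 := (hnoM x1 hx1 x2 hx2).resolve_left hyne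
    have hzall : ∀ xk (hk : xk ∈ dezaB G b x), (f xk hk).2 = (f x1 hx1).2 := by
      intro xk hk
      by_contra hzk
      have hy1 : (f xk hk).1 = (f x1 hx1).1 := (hnoM xk hk x1 hx1).resolve_right hzk
      have hzk2 : (f xk hk).2 ≠ (f x2 hx2).2 := fun h => hzk (h.trans hz12.symm)
      have hy2 : (f xk hk).1 = (f x2 hx2).1 := (hnoM xk hk x2 hx2).resolve_right hzk2
      exact hyne (hy1.symm.trans hy2)
    constructor
    · refine ⟨(f x1 hx1).2, ⟨?_, ?_⟩, ?_⟩
      · intro h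
        rcases mem_insert.1 h with h' | h'
        · exact (hzne' x1 hx1).1 h'
        · exact (hzne' x1 hx1).2 h'
      · intro xk hxk
        rw [hfz xk hxk, hzall xk hxk]
      · rintro z' ⟨hz', hz'all⟩
        have h1 := hz'all x1 hx1
        rw [hfz x1 hx1] at h1
        exact (Finset.singleton_injective h1).symm
    · have hdisj : ∀ xk ∈ dezaB G b x, ∀ xl ∈ dezaB G b x, xk ≠ xl →
          Disjoint (G.neighborFinset x \ G.neighborFinset xk)
            (G.neighborFinset x \ G.neighborFinset xl) := by
        intro xk hk1 xl hl1 hkl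
        rw [hfy xk hk1, hfy xl hl1, Finset.disjoint_singleton]
        intro hyeq
        exact hkl (hP1 xk hk1 xl hl1 hyeq ((hzall xk hk1).trans (hzall xl hl1).symm))
      rw [Finset.card_biUnion hdisj]
      refine (Finset.sum_congr rfl ?_).trans (Finset.card_eq_sum_ones _).symm
      intro xk hxk
      rw [hfy xk hxk, Finset.card_singleton]
end

section
/- Let Γ be a strictly Deza graph with parameters (n, k, b, a) with k = b + 1 and β(v) > 1 for every vertex v. (1) If x is a vertex of type (A1), then for every vertex v ∈ N(x) \ {x*}, B[v] ⊆ N(x) \ {x*}. (2) If x is a vertex of type (A2), then for every vertex v ∈ N(x) \ B(x*), B[v] ⊆ N(x) \ B(x*). -/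
open Finset SimpleGraph

universe u v

section DezaProofAux
variable {V : Type u} [Fintype V] [DecidableEq V] {G : SimpleGraph V} [DecidableRel G.Adj]

lemma comm_comm (x y : V) : commonNbrs G x y = commonNbrs G y x := by
  unfold commonNbrs; rw [Finset.inter_comm]

lemma mem_nbr_symm {x y : V} (h : x ∈ G.neighborFinset y) : y ∈ G.neighborFinset x := by
  rw [mem_neighborFinset] at *; exact h.symm

lemma mem_dezaB_iff {b : ℕ} {u vv : V} : u ∈ dezaB G b vv ↔ u ≠ vv ∧ commonNbrs G u vv = b := by
  simp [dezaB]

lemma card_nbr {k : ℕ} (hreg : G.IsRegularOfDegree k) (vv : V) :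
    (G.neighborFinset vv).card = k := by
  rw [card_neighborFinset_eq_degree]; exact hreg vv

lemma sdiff_singleton' {k b : ℕ} (hreg : G.IsRegularOfDegree k) (hk : k = b + 1)
    {x y : V} (hc : commonNbrs G x y = b) :
    ∃ s, G.neighborFinset x \ G.neighborFinset y = {s} := by
  apply Finset.card_eq_one.mp
  have h1 := Finset.card_inter_add_card_sdiff (G.neighborFinset x) (G.neighborFinset y)
  have h2 := card_nbr hreg x
  unfold commonNbrs at hc
  omega

lemma twins {k b : ℕ} (hreg : G.IsRegularOfDegree k) (hk : k = b + 1)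
    {x y : V} (hxy : x ∈ G.neighborFinset y) (hc : commonNbrs G x y = b) :
    G.neighborFinset x \ {y} = G.neighborFinset y \ {x} := by
  have hyx : y ∈ G.neighborFinset x := mem_nbr_symm hxy
  have e1 : G.neighborFinset x ∩ G.neighborFinset y = G.neighborFinset x \ {y} := by
    apply Finset.eq_of_subset_of_card_le
    · intro t ht
      rw [Finset.mem_inter] at ht
      rw [Finset.mem_sdiff, Finset.mem_singleton]
      exact ⟨ht.1, fun h => G.notMem_neighborFinset_self y (h ▸ ht.2)⟩
    · rw [Finset.card_sdiff_of_subset (Finset.singleton_subset_iff.mpr hyx), Finset.card_singleton,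
        card_nbr hreg x]
      unfold commonNbrs at hc
      omega
  have e2 : G.neighborFinset x ∩ G.neighborFinset y = G.neighborFinset y \ {x} := by
    apply Finset.eq_of_subset_of_card_le
    · intro t ht
      rw [Finset.mem_inter] at ht
      rw [Finset.mem_sdiff, Finset.mem_singleton]
      exact ⟨ht.2, fun h => G.notMem_neighborFinset_self x (h ▸ ht.1)⟩
    · rw [Finset.card_sdiff_of_subset (Finset.singleton_subset_iff.mpr hxy), Finset.card_singleton,
        card_nbr hreg y]
      unfold commonNbrs at hc
      omega
  rw [← e1, e2]

/-- If `u ∈ B(w) ∩ N(w)` where `w ∈ N(x)` and `x` has type (A), then `u ∈ N(x)`. -/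
lemma adj_case {k b : ℕ} (hreg : G.IsRegularOfDegree k) (hk : k = b + 1)
    {x w u : V} (hA : IsTypeA G b x) (hwx : w ∈ G.neighborFinset x)
    (huw : u ∈ G.neighborFinset w) (hc : commonNbrs G u w = b) :
    u ∈ G.neighborFinset x := by
  have htw := twins hreg hk huw hc
  have hxw : x ∈ G.neighborFinset w := mem_nbr_symm hwx
  by_cases hux : u = x
  · exfalso
    subst hux
    have hwB : w ∈ dezaB G b u := by
      rw [mem_dezaB_iff]
      refine ⟨fun h => G.notMem_neighborFinset_self u (h ▸ hwx), ?_⟩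
      have he : G.neighborFinset w ∩ G.neighborFinset u = G.neighborFinset u \ {w} := by
        ext t
        simp only [Finset.mem_inter, Finset.mem_sdiff, Finset.mem_singleton]
        constructor
        · rintro ⟨h1, h2⟩
          exact ⟨h2, fun h => G.notMem_neighborFinset_self w (h ▸ h1)⟩
        · rintro ⟨h1, h2⟩
          have h3 : t ∈ G.neighborFinset u \ {w} := by
            rw [Finset.mem_sdiff, Finset.mem_singleton]; exact ⟨h1, h2⟩
          rw [htw] at h3
          rw [Finset.mem_sdiff] at h3
          exact ⟨h3.1, h1⟩
      unfold commonNbrs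
      rw [he, Finset.card_sdiff_of_subset (Finset.singleton_subset_iff.mpr hwx), Finset.card_singleton,
        card_nbr hreg u]
      omega
    have hmem : w ∈ dezaB G b u ∩ G.neighborFinset u := Finset.mem_inter.mpr ⟨hwB, hwx⟩
    rw [hA] at hmem
    simp at hmem
  · have h3 : x ∈ G.neighborFinset w \ {u} := by
      rw [Finset.mem_sdiff, Finset.mem_singleton]
      exact ⟨hxw, fun h => hux h.symm⟩
    rw [← htw] at h3
    rw [Finset.mem_sdiff] at h3
    exact mem_nbr_symm h3.1

/-- A neighbour of a type-(A) vertex has exactly `a` common neighbours with it. -/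
lemma nbr_common_a {b a : ℕ}
    (hDeza : ∀ x y : V, x ≠ y → commonNbrs G x y = b ∨ commonNbrs G x y = a)
    {x w : V} (hA : IsTypeA G b x) (hwx : w ∈ G.neighborFinset x) :
    commonNbrs G w x = a := by
  have hwnex : w ≠ x := fun h => G.notMem_neighborFinset_self x (h ▸ hwx)
  rcases hDeza w x hwnex with h | h
  · exfalso
    have hmem : w ∈ dezaB G b x ∩ G.neighborFinset x :=
      Finset.mem_inter.mpr ⟨mem_dezaB_iff.mpr ⟨hwnex, h⟩, hwx⟩
    rw [hA] at hmem
    simp at hmem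
  · exact h

/-- If `u ∈ N(x) ∩ N(z)` with `z ∉ N(x)`, `z ≠ x` and `|N(u) ∩ N(z)| = b`, contradiction. -/
lemma twins_z_contra {k b : ℕ} (hreg : G.IsRegularOfDegree k) (hk : k = b + 1)
    {x z u : V} (hznNx : z ∉ G.neighborFinset x) (hznex : z ≠ x)
    (huNx : u ∈ G.neighborFinset x) (huz : u ∈ G.neighborFinset z)
    (hcuz : commonNbrs G u z = b) : False := by
  have htz := twins hreg hk huz hcuz
  have h3 : x ∈ G.neighborFinset u \ {z} := by
    rw [Finset.mem_sdiff, Finset.mem_singleton]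
    exact ⟨mem_nbr_symm huNx, fun h => hznex h.symm⟩
  rw [htz] at h3
  rw [Finset.mem_sdiff] at h3
  exact hznNx (mem_nbr_symm h3.1)

end DezaProofAux

theorem stmt12 {V : Type u} [Fintype V] [DecidableEq V] (G : SimpleGraph V)
    [DecidableRel G.Adj] (n k b a : ℕ)
    (hG : IsStrictlyDezaGraph G n k b a) (hk : k = b + 1)
    (hβ : ∀ v : V, 1 < (dezaB G b v).card) :
    (∀ x y : V, IsTypeA G b x → y ∈ G.neighborFinset x →
      (∀ xi ∈ dezaB G b x, G.neighborFinset x \ G.neighborFinset xi = {y}) →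
      ∀ w ∈ G.neighborFinset x \ {y},
        dezaBc G b w ⊆ G.neighborFinset x \ {y}) ∧
    (∀ x z : V, IsTypeA G b x → z ∉ insert x (G.neighborFinset x) →
      (∀ xi ∈ dezaB G b x, G.neighborFinset xi \ G.neighborFinset x = {z}) →
      ∀ w ∈ G.neighborFinset x \ dezaB G b z,
        dezaBc G b w ⊆ G.neighborFinset x \ dezaB G b z) := by
  obtain ⟨⟨hne, hcard, hreg, hab, hDeza⟩, -, -, -, -⟩ := hG
  constructor
  · -- Part (1)
    intro x y hA hy hA1 w hw u hu
    rw [Finset.mem_sdiff, Finset.mem_singleton] at hw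
    obtain ⟨hwNx, hwny⟩ := hw
    rw [dezaBc, Finset.mem_insert] at hu
    rcases hu with rfl | hu
    · rw [Finset.mem_sdiff, Finset.mem_singleton]; exact ⟨hwNx, hwny⟩
    obtain ⟨hunw, hcuw⟩ := mem_dezaB_iff.mp hu
    obtain ⟨xi, hxi, xj, hxj, hij⟩ := Finset.one_lt_card.mp (hβ x)
    -- basic facts about members of B(x)
    have hmemNxi : ∀ xi' ∈ dezaB G b x, ∀ t ∈ G.neighborFinset x, t ≠ y →
        t ∈ G.neighborFinset xi' := by
      intro xi' h' t ht hty
      by_contra hnt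
      have h3 : t ∈ G.neighborFinset x \ G.neighborFinset xi' :=
        Finset.mem_sdiff.mpr ⟨ht, hnt⟩
      rw [hA1 xi' h', Finset.mem_singleton] at h3
      exact hty h3
    have hynotNxi : ∀ xi' ∈ dezaB G b x, y ∉ G.neighborFinset xi' := by
      intro xi' h'
      have h3 : y ∈ G.neighborFinset x \ G.neighborFinset xi' := by
        rw [hA1 xi' h']; exact Finset.mem_singleton_self y
      exact (Finset.mem_sdiff.mp h3).2
    have hxinotNx : ∀ xi' ∈ dezaB G b x, xi' ∉ G.neighborFinset x := by
      intro xi' h' hmem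
      have h3 : xi' ∈ dezaB G b x ∩ G.neighborFinset x := Finset.mem_inter.mpr ⟨h', hmem⟩
      rw [hA] at h3; simp at h3
    have hxiNw : xi ∈ G.neighborFinset w :=
      mem_nbr_symm (hmemNxi xi hxi w hwNx hwny)
    have hxjNw : xj ∈ G.neighborFinset w :=
      mem_nbr_symm (hmemNxi xj hxj w hwNx hwny)
    -- N(xi) ∩ N(xj) = N(x) \ {y}
    have hinter : G.neighborFinset xi ∩ G.neighborFinset xj = G.neighborFinset x \ {y} := by
      symm
      apply Finset.eq_of_subset_of_card_le
      · intro t ht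
        rw [Finset.mem_sdiff, Finset.mem_singleton] at ht
        exact Finset.mem_inter.mpr
          ⟨hmemNxi xi hxi t ht.1 ht.2, hmemNxi xj hxj t ht.1 ht.2⟩
      · have h4 : commonNbrs G xi xj = b ∨ commonNbrs G xi xj = a := hDeza xi xj hij
        unfold commonNbrs at h4
        rw [Finset.card_sdiff_of_subset (Finset.singleton_subset_iff.mpr hy), Finset.card_singleton,
          card_nbr hreg x]
        omega
    by_cases huwadj : u ∈ G.neighborFinset w
    · -- u adjacent to w: u and w are closed twins
      have huNx : u ∈ G.neighborFinset x := adj_case hreg hk hA hwNx huwadj hcuw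
      rw [Finset.mem_sdiff, Finset.mem_singleton]
      refine ⟨huNx, ?_⟩
      rintro rfl
      have htw := twins hreg hk huwadj hcuw
      have hxine : xi ≠ u := fun h => hxinotNx xi hxi (h ▸ huNx)
      have h3 : xi ∈ G.neighborFinset w \ {u} := by
        rw [Finset.mem_sdiff, Finset.mem_singleton]; exact ⟨hxiNw, hxine⟩
      rw [← htw] at h3
      rw [Finset.mem_sdiff] at h3
      exact hynotNxi xi hxi (mem_nbr_symm h3.1)
    · -- u not adjacent to w
      have hxNw : x ∈ G.neighborFinset w := mem_nbr_symm hwNx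
      have huNx : u ∈ G.neighborFinset x := by
        by_contra hunx
        have he : G.neighborFinset u ∩ G.neighborFinset w = G.neighborFinset w \ {x} := by
          apply Finset.eq_of_subset_of_card_le
          · intro t ht
            obtain ⟨h1, h2⟩ := Finset.mem_inter.mp ht
            rw [Finset.mem_sdiff, Finset.mem_singleton]
            exact ⟨h2, fun h => hunx (mem_nbr_symm (h ▸ h1))⟩
          · rw [Finset.card_sdiff_of_subset (Finset.singleton_subset_iff.mpr hxNw),
              Finset.card_singleton, card_nbr hreg w]
            unfold commonNbrs at hcuw
            omega
        have hget : ∀ xi' ∈ dezaB G b x, xi' ∈ G.neighborFinset w →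
            u ∈ G.neighborFinset xi' := by
          intro xi' h' hxw'
          have h3 : xi' ∈ G.neighborFinset w \ {x} := by
            rw [Finset.mem_sdiff, Finset.mem_singleton]
            exact ⟨hxw', (mem_dezaB_iff.mp h').1⟩
          rw [← he] at h3
          exact mem_nbr_symm (Finset.mem_inter.mp h3).1
        have h5 : u ∈ G.neighborFinset xi ∩ G.neighborFinset xj :=
          Finset.mem_inter.mpr ⟨hget xi hxi hxiNw, hget xj hxj hxjNw⟩
        rw [hinter, Finset.mem_sdiff] at h5
        exact hunx h5.1
      rw [Finset.mem_sdiff, Finset.mem_singleton]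
      refine ⟨huNx, ?_⟩
      rintro rfl
      obtain ⟨s, hs⟩ := sdiff_singleton' hreg hk ((comm_comm w u).trans hcuw ▸ rfl :
        commonNbrs G w u = b)
      have hin : ∀ xi' ∈ dezaB G b x, xi' ∈ G.neighborFinset w →
          xi' ∈ G.neighborFinset w \ G.neighborFinset u := by
        intro xi' h' hxw'
        exact Finset.mem_sdiff.mpr ⟨hxw', fun h => hynotNxi xi' h' (mem_nbr_symm h)⟩
      have h1 := hin xi hxi hxiNw
      have h2 := hin xj hxj hxjNw
      rw [hs, Finset.mem_singleton] at h1 h2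
      exact hij (h1.trans h2.symm)
  · -- Part (2)
    intro x z hA hz hA2 w hw u hu
    rw [Finset.mem_insert] at hz
    push_neg at hz
    obtain ⟨hznex, hznNx⟩ := hz
    rw [Finset.mem_sdiff] at hw
    obtain ⟨hwNx, hwnB⟩ := hw
    rw [dezaBc, Finset.mem_insert] at hu
    rcases hu with rfl | hu
    · exact Finset.mem_sdiff.mpr ⟨hwNx, hwnB⟩
    obtain ⟨hunw, hcuw⟩ := mem_dezaB_iff.mp hu
    have hwnez : w ≠ z := fun h => hznNx (h ▸ hwNx)
    have hcwz : commonNbrs G w z = a := by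
      rcases hDeza w z hwnez with h | h
      · exact absurd (mem_dezaB_iff.mpr ⟨hwnez, h⟩) hwnB
      · exact h
    -- z ∉ B(x), hence commonNbrs z x = a and a < b
    have hzbF : commonNbrs G z x = b → False := by
      intro h
      have hzB : z ∈ dezaB G b x := mem_dezaB_iff.mpr ⟨hznex, h⟩
      have h3 : z ∈ G.neighborFinset z \ G.neighborFinset x := by
        rw [hA2 z hzB]; exact Finset.mem_singleton_self z
      exact G.notMem_neighborFinset_self z (Finset.mem_sdiff.mp h3).1
    have hcza : commonNbrs G z x = a := (hDeza z x hznex).resolve_left (fun h => (hzbF h).elim)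
    have hba : a < b := lt_of_le_of_ne hab (fun h => hzbF (h ▸ hcza))
    obtain ⟨xi, hxi, xj, hxj, hij⟩ := Finset.one_lt_card.mp (hβ x)
    -- for each member xi' of B(x) there is yi with N(xi') = {z} ∪ (N(x) \ {yi}), yi ∉ N(z)
    have key : ∀ xi' ∈ dezaB G b x, ∃ yi, yi ∈ G.neighborFinset x ∧
        yi ∉ G.neighborFinset z ∧
        ∀ t, t ∈ G.neighborFinset xi' ↔
          (t = z ∨ (t ∈ G.neighborFinset x ∧ t ≠ yi)) := by
      intro xi' h'
      obtain ⟨hne', hcb'⟩ := mem_dezaB_iff.mp h'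
      have hz' : G.neighborFinset xi' \ G.neighborFinset x = {z} := hA2 xi' h'
      have hzNxi' : z ∈ G.neighborFinset xi' := by
        have h3 : z ∈ G.neighborFinset xi' \ G.neighborFinset x := by
          rw [hz']; exact Finset.mem_singleton_self z
        exact (Finset.mem_sdiff.mp h3).1
      obtain ⟨yi, hyi⟩ := sdiff_singleton' hreg hk ((comm_comm x xi').trans hcb')
      have hyimem : yi ∈ G.neighborFinset x ∧ yi ∉ G.neighborFinset xi' := by
        have h3 : yi ∈ G.neighborFinset x \ G.neighborFinset xi' := by
          rw [hyi]; exact Finset.mem_singleton_self yi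
        exact Finset.mem_sdiff.mp h3
      have hdesc : ∀ t, t ∈ G.neighborFinset xi' ↔
          (t = z ∨ (t ∈ G.neighborFinset x ∧ t ≠ yi)) := by
        intro t
        constructor
        · intro ht
          by_cases htx : t ∈ G.neighborFinset x
          · exact Or.inr ⟨htx, fun h => hyimem.2 (h ▸ ht)⟩
          · left
            have h3 : t ∈ G.neighborFinset xi' \ G.neighborFinset x :=
              Finset.mem_sdiff.mpr ⟨ht, htx⟩
            rw [hz', Finset.mem_singleton] at h3
            exact h3
        · rintro (rfl | ⟨h1, h2⟩)
          · exact hzNxi'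
          · by_contra hnt
            have h3 : t ∈ G.neighborFinset x \ G.neighborFinset xi' :=
              Finset.mem_sdiff.mpr ⟨h1, hnt⟩
            rw [hyi, Finset.mem_singleton] at h3
            exact h2 h3
      refine ⟨yi, hyimem.1, ?_, hdesc⟩
      -- yi ∉ N(z)
      intro hmem
      have hxine_z : xi' ≠ z := fun h => G.notMem_neighborFinset_self z (h ▸ hzNxi')
      have hinter2 : G.neighborFinset xi' ∩ G.neighborFinset z =
          (G.neighborFinset x ∩ G.neighborFinset z) \ {yi} := by
        ext t
        rw [Finset.mem_inter, Finset.mem_sdiff, Finset.mem_inter, Finset.mem_singleton,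
          hdesc t]
        constructor
        · rintro ⟨rfl | ⟨h1, h2⟩, htz⟩
          · exact absurd htz (G.notMem_neighborFinset_self _)
          · exact ⟨⟨h1, htz⟩, h2⟩
        · rintro ⟨⟨h1, h3⟩, h2⟩
          exact ⟨Or.inr ⟨h1, h2⟩, h3⟩
      have hcnz : (G.neighborFinset x ∩ G.neighborFinset z).card = a := by
        have h5 := hcza
        unfold commonNbrs at h5
        rw [Finset.inter_comm]
        exact h5
      have hmem2 : yi ∈ G.neighborFinset x ∩ G.neighborFinset z :=
        Finset.mem_inter.mpr ⟨hyimem.1, hmem⟩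
      have h6 : commonNbrs G xi' z =
          ((G.neighborFinset x ∩ G.neighborFinset z) \ {yi}).card := by
        unfold commonNbrs; rw [hinter2]
      rw [Finset.card_sdiff_of_subset (Finset.singleton_subset_iff.mpr hmem2), Finset.card_singleton,
        hcnz] at h6
      have h7 : 0 < a := by
        rw [← hcnz]; exact Finset.card_pos.mpr ⟨yi, hmem2⟩
      rcases hDeza xi' z hxine_z with h | h <;> omega
    obtain ⟨yi, hyiNx, hyiz, hdi⟩ := key xi hxi
    obtain ⟨yj, hyjNx, hyjz, hdj⟩ := key xj hxj
    have hyij : yi ≠ yj := by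
      rintro rfl
      have heq : G.neighborFinset xi = G.neighborFinset xj :=
        Finset.ext fun t => (hdi t).trans (hdj t).symm
      have hcij := hDeza xi xj hij
      unfold commonNbrs at hcij
      rw [heq, Finset.inter_self, card_nbr hreg xj] at hcij
      omega
    by_cases huwadj : u ∈ G.neighborFinset w
    · -- adjacent case: u and w closed twins
      have huNx : u ∈ G.neighborFinset x := adj_case hreg hk hA hwNx huwadj hcuw
      refine Finset.mem_sdiff.mpr ⟨huNx, ?_⟩
      intro huB
      obtain ⟨hunez, hcuz⟩ := mem_dezaB_iff.mp huB
      by_cases huz : u ∈ G.neighborFinset z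
      · exact twins_z_contra hreg hk hznNx hznex huNx huz hcuz
      · have htw := twins hreg hk huwadj hcuw
        have hwz : w ∈ G.neighborFinset z := by
          by_contra hwz
          have hsub : G.neighborFinset u ∩ G.neighborFinset z ⊆
              G.neighborFinset w ∩ G.neighborFinset z := by
            intro t ht
            obtain ⟨h1, h2⟩ := Finset.mem_inter.mp ht
            have h3 : t ∈ G.neighborFinset u \ {w} := by
              rw [Finset.mem_sdiff, Finset.mem_singleton]
              exact ⟨h1, fun h => hwz (h ▸ h2)⟩
            rw [htw] at h3
            exact Finset.mem_inter.mpr ⟨(Finset.mem_sdiff.mp h3).1, h2⟩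
          have h4 := Finset.card_le_card hsub
          unfold commonNbrs at hcuz hcwz
          omega
        have h3 : z ∈ G.neighborFinset w \ {u} := by
          rw [Finset.mem_sdiff, Finset.mem_singleton]
          exact ⟨mem_nbr_symm hwz, fun h => hznNx (h ▸ huNx)⟩
        rw [← htw] at h3
        exact huz (mem_nbr_symm (Finset.mem_sdiff.mp h3).1)
    · -- non-adjacent case
      have hxNw : x ∈ G.neighborFinset w := mem_nbr_symm hwNx
      have huNx : u ∈ G.neighborFinset x := by
        by_contra hunx
        have he : G.neighborFinset u ∩ G.neighborFinset w = G.neighborFinset w \ {x} := by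
          apply Finset.eq_of_subset_of_card_le
          · intro t ht
            obtain ⟨h1, h2⟩ := Finset.mem_inter.mp ht
            rw [Finset.mem_sdiff, Finset.mem_singleton]
            exact ⟨h2, fun h => hunx (mem_nbr_symm (h ▸ h1))⟩
          · rw [Finset.card_sdiff_of_subset (Finset.singleton_subset_iff.mpr hxNw),
              Finset.card_singleton, card_nbr hreg w]
            unfold commonNbrs at hcuw
            omega
        have hgetz : ∀ xi' yi', xi' ∈ dezaB G b x →
            (∀ t, t ∈ G.neighborFinset xi' ↔
              (t = z ∨ (t ∈ G.neighborFinset x ∧ t ≠ yi'))) → yi' ≠ w → u = z := by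
          intro xi' yi' hB hdesc hne
          have hwNxi' : w ∈ G.neighborFinset xi' :=
            (hdesc w).mpr (Or.inr ⟨hwNx, fun h => hne h.symm⟩)
          have h3 : xi' ∈ G.neighborFinset w \ {x} := by
            rw [Finset.mem_sdiff, Finset.mem_singleton]
            exact ⟨mem_nbr_symm hwNxi', (mem_dezaB_iff.mp hB).1⟩
          rw [← he] at h3
          have huNxi' : u ∈ G.neighborFinset xi' :=
            mem_nbr_symm (Finset.mem_inter.mp h3).1
          rcases (hdesc u).mp huNxi' with h | ⟨h, -⟩
          · exact h
          · exact absurd h hunx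
        have huz : u = z := by
          by_cases hyiw : yi = w
          · exact hgetz xj yj hxj hdj (fun h => hyij (hyiw.trans h.symm))
          · exact hgetz xi yi hxi hdi hyiw
        subst huz
        refine hwnB (mem_dezaB_iff.mpr ⟨hwnez, ?_⟩)
        rw [comm_comm]
        exact hcuw
      refine Finset.mem_sdiff.mpr ⟨huNx, ?_⟩
      intro huB
      obtain ⟨hunez, hcuz⟩ := mem_dezaB_iff.mp huB
      by_cases huz : u ∈ G.neighborFinset z
      · exact twins_z_contra hreg hk hznNx hznex huNx huz hcuz
      · -- the long case
        obtain ⟨s0, hs0⟩ := sdiff_singleton' hreg hk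
          (show commonNbrs G z u = b by rw [comm_comm]; exact hcuz)
        obtain ⟨p, hp⟩ := sdiff_singleton' hreg hk hcuw
        have hcux : commonNbrs G u x = a := nbr_common_a hDeza hA huNx
        have hs0mem : s0 ∈ G.neighborFinset z ∧ s0 ∉ G.neighborFinset u := by
          have h3 : s0 ∈ G.neighborFinset z \ G.neighborFinset u := by
            rw [hs0]; exact Finset.mem_singleton_self s0
          exact Finset.mem_sdiff.mp h3
        have hpmem : p ∈ G.neighborFinset u ∧ p ∉ G.neighborFinset w := by
          have h3 : p ∈ G.neighborFinset u \ G.neighborFinset w := by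
            rw [hp]; exact Finset.mem_singleton_self p
          exact Finset.mem_sdiff.mp h3
        -- Step 2 : N(z) ∩ N(w) = (N(z) ∩ N(u)) \ {p}  and a = b - 1
        have hsub2 : (G.neighborFinset z ∩ G.neighborFinset u) \ {p} ⊆
            G.neighborFinset z ∩ G.neighborFinset w := by
          intro t ht
          rw [Finset.mem_sdiff, Finset.mem_inter, Finset.mem_singleton] at ht
          obtain ⟨⟨h1, h2⟩, h3⟩ := ht
          refine Finset.mem_inter.mpr ⟨h1, ?_⟩
          by_contra h4
          have h5 : t ∈ G.neighborFinset u \ G.neighborFinset w :=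
            Finset.mem_sdiff.mpr ⟨h2, h4⟩
          rw [hp, Finset.mem_singleton] at h5
          exact h3 h5
        have hczu : (G.neighborFinset z ∩ G.neighborFinset u).card = b := by
          unfold commonNbrs at hcuz
          rw [Finset.inter_comm]; exact hcuz
        have hczw : (G.neighborFinset z ∩ G.neighborFinset w).card = a := by
          have h5 := hcwz
          unfold commonNbrs at h5
          rw [Finset.inter_comm]; exact h5
        have hcard2 := Finset.card_le_card hsub2
        have hcard2 := Finset.card_le_card hsub2
        have hge := Finset.card_le_card_sdiff_add_card (s := G.neighborFinset z ∩
          G.neighborFinset u) (t := ({p} : Finset V))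
        rw [Finset.card_singleton, hczu] at hge
        rw [hczw] at hcard2
        -- so a = b - 1 and the sdiff has card a
        have hab2 : b = a + 1 := by omega
        have hcard3 : ((G.neighborFinset z ∩ G.neighborFinset u) \ {p}).card = a := by
          omega
        have heq2 : (G.neighborFinset z ∩ G.neighborFinset u) \ {p} =
            G.neighborFinset z ∩ G.neighborFinset w := by
          apply Finset.eq_of_subset_of_card_le hsub2
          rw [hczw, hcard3]
        -- Step 1 : N(u) \ N(z) = {x}
        have hxNu : x ∈ G.neighborFinset u := mem_nbr_symm huNx
        have hxnz : x ∉ G.neighborFinset z := fun h => hznNx (mem_nbr_symm h)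
        have hNuNz : G.neighborFinset u \ G.neighborFinset z = {x} := by
          obtain ⟨t0, ht0⟩ := sdiff_singleton' hreg hk hcuz
          have h4 : x ∈ G.neighborFinset u \ G.neighborFinset z :=
            Finset.mem_sdiff.mpr ⟨hxNu, hxnz⟩
          rw [ht0, Finset.mem_singleton] at h4
          rw [← h4] at ht0
          exact ht0
        have hNudesc : ∀ t, t ∈ G.neighborFinset u ↔
            (t = x ∨ (t ∈ G.neighborFinset z ∧ t ≠ s0)) := by
          intro t
          constructor
          · intro ht
            by_cases htz : t ∈ G.neighborFinset z
            · exact Or.inr ⟨htz, fun h => hs0mem.2 (h ▸ ht)⟩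
            · left
              have h4 : t ∈ G.neighborFinset u \ G.neighborFinset z :=
                Finset.mem_sdiff.mpr ⟨ht, htz⟩
              rw [hNuNz, Finset.mem_singleton] at h4
              exact h4
          · rintro (rfl | ⟨h1, h2⟩)
            · exact hxNu
            · by_contra h3
              have h4 : t ∈ G.neighborFinset z \ G.neighborFinset u :=
                Finset.mem_sdiff.mpr ⟨h1, h3⟩
              rw [hs0, Finset.mem_singleton] at h4
              exact h2 h4
        -- Step 3 : s0 ∉ N(x)
        have hczx : (G.neighborFinset z ∩ G.neighborFinset x).card = a := by
          unfold commonNbrs at hcza; exact hcza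
        have heq3 : G.neighborFinset u ∩ G.neighborFinset x =
            (G.neighborFinset z ∩ G.neighborFinset x) \ {s0} := by
          ext t
          rw [Finset.mem_inter, Finset.mem_sdiff, Finset.mem_inter, Finset.mem_singleton,
            hNudesc t]
          constructor
          · rintro ⟨rfl | ⟨h1, h2⟩, htx⟩
            · exact absurd htx (G.notMem_neighborFinset_self _)
            · exact ⟨⟨h1, htx⟩, h2⟩
          · rintro ⟨⟨h1, h3⟩, h2⟩
            exact ⟨Or.inr ⟨h1, h2⟩, h3⟩
        have hs0nx : s0 ∉ G.neighborFinset x := by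
          intro h4
          have hm : s0 ∈ G.neighborFinset z ∩ G.neighborFinset x :=
            Finset.mem_inter.mpr ⟨hs0mem.1, h4⟩
          have h5 := hcux
          unfold commonNbrs at h5
          rw [heq3, Finset.card_sdiff_of_subset (Finset.singleton_subset_iff.mpr hm),
            Finset.card_singleton, hczx] at h5
          have h7 : 0 < a := by
            rw [← hczx]
            exact Finset.card_pos.mpr ⟨s0, hm⟩
          omega
        -- Step 4 : N(x) \ N(z) = {u, w}
        have hwnz : w ∉ G.neighborFinset z := by
          intro h4
          have h5 : w ∈ G.neighborFinset z \ G.neighborFinset u :=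
            Finset.mem_sdiff.mpr ⟨h4, fun h => huwadj (mem_nbr_symm h)⟩
          rw [hs0, Finset.mem_singleton] at h5
          exact hs0nx (h5 ▸ hwNx)
        have hNxNz : G.neighborFinset x \ G.neighborFinset z = {u, w} := by
          symm
          apply Finset.eq_of_subset_of_card_le
          · intro t ht
            rw [Finset.mem_insert, Finset.mem_singleton] at ht
            rcases ht with rfl | rfl
            · exact Finset.mem_sdiff.mpr ⟨huNx, huz⟩
            · exact Finset.mem_sdiff.mpr ⟨hwNx, hwnz⟩
          · have h6 := Finset.card_inter_add_card_sdiff (G.neighborFinset x)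
              (G.neighborFinset z)
            have h7 : (G.neighborFinset x ∩ G.neighborFinset z).card = a := by
              rw [Finset.inter_comm]; exact hczx
            have h8 := card_nbr hreg x
            rw [Finset.card_pair hunw]
            omega
        -- Steps 5–6 : find x1 ∈ B(x) whose missing neighbour is u
        have hyimem : yi = u ∨ yi = w := by
          have h4 : yi ∈ G.neighborFinset x \ G.neighborFinset z :=
            Finset.mem_sdiff.mpr ⟨hyiNx, hyiz⟩
          rw [hNxNz, Finset.mem_insert, Finset.mem_singleton] at h4
          exact h4
        have hyjmem : yj = u ∨ yj = w := by
          have h4 : yj ∈ G.neighborFinset x \ G.neighborFinset z :=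
            Finset.mem_sdiff.mpr ⟨hyjNx, hyjz⟩
          rw [hNxNz, Finset.mem_insert, Finset.mem_singleton] at h4
          exact h4
        obtain ⟨x1, hx1, d1⟩ : ∃ x1, x1 ∈ dezaB G b x ∧
            ∀ t, t ∈ G.neighborFinset x1 ↔
              (t = z ∨ (t ∈ G.neighborFinset x ∧ t ≠ u)) := by
          rcases hyimem with h | h
          · exact ⟨xi, hxi, h ▸ hdi⟩
          · rcases hyjmem with h' | h'
            · exact ⟨xj, hxj, h' ▸ hdj⟩
            · exact absurd (h.trans h'.symm) hyij
        -- Step 7 : the final contradiction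
        have hzNx1 : z ∈ G.neighborFinset x1 := (d1 z).mpr (Or.inl rfl)
        have hx1Nz : x1 ∈ G.neighborFinset z := mem_nbr_symm hzNx1
        have hx1nu : x1 ∉ G.neighborFinset u := by
          intro h4
          rcases (d1 u).mp (mem_nbr_symm h4) with h | ⟨-, h⟩
          · exact hunez h
          · exact h rfl
        have hx1Nw : x1 ∈ G.neighborFinset w :=
          mem_nbr_symm ((d1 w).mpr (Or.inr ⟨hwNx, fun h => hunw h.symm⟩))
        have h5 : x1 ∈ G.neighborFinset z ∩ G.neighborFinset w :=
          Finset.mem_inter.mpr ⟨hx1Nz, hx1Nw⟩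
        rw [← heq2] at h5
        exact hx1nu (Finset.mem_inter.mp (Finset.mem_sdiff.mp h5).1).2
end
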